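/- arXiv:2402.12562 — 12 statements merged into one kernel-verified Lean document; each statement's English description precedes it below -/
import Mathlib

section
/- Fix integers 1 ≤ t1 ≤ T, a starting reference price r ∈ [0,p̄], and gain-seeking reference effects η⁺ ≥ η⁻ ≥ 0. For every price sequence p = (p_t)_{t=t1}^{T} with values in [0,p̄], the non-increasing rearrangement q of p satisfies V^q(r,t1) ≥ V^p(r,t1). In particular, for gain-seeking customers the optimal value V*(r,t1) equals the supremum of V^q(r,t1) over non-increasing sequences q in [0,p̄]^{T−t1+1}. -/
/-- ARM reference price at time `t`, starting from reference price `r` at time `t1`: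
`r_t = (t1·r + Σ_{s=t1}^{t−1} p_s)/t`. -/
noncomputable def armRef (t1 : ℕ) (r : ℝ) (p : ℕ → ℝ) (t : ℕ) : ℝ :=
  ((t1 : ℝ) * r + ∑ s ∈ Finset.Ico t1 t, p s) / (t : ℝ)

/-- Single-round expected revenue `Π(x, r)` with base demand `H` and reference effects. -/
noncomputable def armRev (H : ℝ → ℝ) (ηp ηm : ℝ) (x r : ℝ) : ℝ :=
  x * (H x + ηp * max (r - x) 0 - ηm * max (x - r) 0)

/-- Total ARM revenue `V^p(r, t1)` of price sequence `p` over rounds `t1..T`. -/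
noncomputable def armV (H : ℝ → ℝ) (ηp ηm : ℝ) (t1 T : ℕ) (r : ℝ) (p : ℕ → ℝ) : ℝ :=
  ∑ t ∈ Finset.Icc t1 T, armRev H ηp ηm (p t) (armRef t1 r p t)

/-- Optimal ARM revenue `V*(r, t1)`: supremum over all price sequences valued in `[0, p̄]`. -/
noncomputable def armVStar (H : ℝ → ℝ) (ηp ηm : ℝ) (t1 T : ℕ) (pbar r : ℝ) : ℝ :=
  sSup {x : ℝ | ∃ p : ℕ → ℝ,
    (∀ t ∈ Finset.Icc t1 T, p t ∈ Set.Icc 0 pbar) ∧ x = armV H ηp ηm t1 T r p}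

lemma ARM.rev_eq (H : ℝ → ℝ) (ηp ηm x r : ℝ) :
    armRev H ηp ηm x r = x * H x + (ηp - ηm) * (x * max (r - x) 0) + ηm * (x * (r - x)) := by
  unfold armRev
  rcases le_total x r with h | h
  · rw [max_eq_left (by linarith), max_eq_right (by linarith)]; ring
  · rw [max_eq_right (by linarith), max_eq_left (by linarith)]; ring

set_option maxHeartbeats 1600000 in
lemma ARM.core_ineq (H : ℝ → ℝ) (ηp ηm : ℝ) (hηm : 0 ≤ ηm) (hη : ηm ≤ ηp)
    (a b ρ L : ℝ) (ha : 0 ≤ a) (hab : a ≤ b) (hρ : 0 ≤ ρ)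
    (hL0 : 0 ≤ L) (hL1 : L ≤ 1) :
    armRev H ηp ηm a ρ + armRev H ηp ηm b (ρ - L * (ρ - a))
      ≤ armRev H ηp ηm b ρ + armRev H ηp ηm a (ρ - L * (ρ - b)) := by
  have hb : 0 ≤ b := le_trans ha hab
  have hp' : 0 ≤ ηp := le_trans hηm hη
  have hpm : 0 ≤ ηp - ηm := sub_nonneg.2 hη
  have hba : 0 ≤ b - a := sub_nonneg.2 hab
  have hL1' : 0 ≤ 1 - L := sub_nonneg.2 hL1
  rw [ARM.rev_eq, ARM.rev_eq, ARM.rev_eq, ARM.rev_eq]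
  rcases max_cases (ρ - a) 0 with ⟨e1, h1⟩ | ⟨e1, h1⟩ <;>
  rcases max_cases (ρ - b) 0 with ⟨e2, h2⟩ | ⟨e2, h2⟩ <;>
  rcases max_cases (ρ - L * (ρ - a) - b) 0 with ⟨e3, h3⟩ | ⟨e3, h3⟩ <;>
  rcases max_cases (ρ - L * (ρ - b) - a) 0 with ⟨e4, h4⟩ | ⟨e4, h4⟩ <;>
  rw [e1, e2, e3, e4] <;>
  nlinarith [mul_nonneg (mul_nonneg hp' hL0) (mul_nonneg hρ hba),
    mul_nonneg (mul_nonneg hηm hL0) (mul_nonneg hρ hba),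
    mul_nonneg ha hpm, mul_nonneg hb hpm,
    mul_nonneg (mul_nonneg hb hpm) hL1',
    mul_nonneg (mul_nonneg (mul_nonneg hb hηm) hL0) hba,
    mul_nonneg (mul_nonneg hba hp') hL0,
    mul_nonneg (mul_nonneg hb hηm) hL0,
    mul_nonneg (mul_nonneg ha hp') hL0]

lemma ARM.swap_V (H : ℝ → ℝ) (ηp ηm : ℝ) (hηm : 0 ≤ ηm) (hη : ηm ≤ ηp)
    (t1 T s : ℕ) (ht1 : 1 ≤ t1) (hs : t1 ≤ s) (hsT : s + 1 ≤ T)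
    (r : ℝ) (hr : 0 ≤ r) (p : ℕ → ℝ) (hp : ∀ t ∈ Finset.Icc t1 T, 0 ≤ p t)
    (hab : p s ≤ p (s + 1)) :
    armV H ηp ηm t1 T r p ≤ armV H ηp ηm t1 T r (fun t => p (Equiv.swap s (s + 1) t)) := by
  set p' : ℕ → ℝ := fun t => p (Equiv.swap s (s + 1) t) with hp'def
  have hps : p' s = p (s + 1) := by simp [hp'def]
  have hps1 : p' (s + 1) = p s := by simp [hp'def]
  have hpt : ∀ t, t ≠ s → t ≠ s + 1 → p' t = p t := by
    intro t h1 h2; simp [hp'def, Equiv.swap_apply_of_ne_of_ne h1 h2]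
  have hsum : ∀ t, t ≠ s + 1 → (∑ x ∈ Finset.Ico t1 t, p' x) = ∑ x ∈ Finset.Ico t1 t, p x := by
    intro t ht
    rcases le_or_gt t (s+1) with h | h
    · refine Finset.sum_congr rfl fun x hx => ?_
      rw [Finset.mem_Ico] at hx
      exact hpt x (by omega) (by omega)
    · refine Finset.sum_equiv (Equiv.swap s (s+1)) (fun i => ?_) (fun i _ => rfl)
      simp only [Finset.mem_Ico, Equiv.swap_apply_def]
      split_ifs <;> omega
  have href : ∀ t, t ≠ s + 1 → armRef t1 r p' t = armRef t1 r p t := by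
    intro t ht; unfold armRef; rw [hsum t ht]
  set ρ := armRef t1 r p s with hρdef
  have hsne : (s : ℝ) ≠ 0 := by
    have : 1 ≤ s := le_trans ht1 hs
    exact_mod_cast Nat.one_le_iff_ne_zero.mp this
  have hsums : (t1 : ℝ) * r + ∑ x ∈ Finset.Ico t1 s, p x = s * ρ := by
    rw [hρdef]; unfold armRef; field_simp
  have hρ0 : 0 ≤ ρ := by
    rw [hρdef]; unfold armRef
    apply div_nonneg _ (Nat.cast_nonneg s)
    have h1 : (0:ℝ) ≤ (t1:ℝ) * r := mul_nonneg (Nat.cast_nonneg t1) hr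
    have h2 : (0:ℝ) ≤ ∑ x ∈ Finset.Ico t1 s, p x := by
      apply Finset.sum_nonneg
      intro x hx; rw [Finset.mem_Ico] at hx
      exact hp x (Finset.mem_Icc.mpr ⟨hx.1, by omega⟩)
    linarith
  set L : ℝ := 1 / ((s : ℝ) + 1) with hLdef
  have hLpos : (0:ℝ) < (s:ℝ) + 1 := by positivity
  have hL0 : 0 ≤ L := by positivity
  have hL1 : L ≤ 1 := by rw [hLdef]; rw [div_le_one hLpos]; linarith [Nat.cast_nonneg (α := ℝ) s]
  have href1 : armRef t1 r p (s+1) = ρ - L * (ρ - p s) := by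
    unfold armRef
    rw [Finset.sum_Ico_succ_top hs, ← add_assoc, hsums, hLdef]
    push_cast
    field_simp
    ring
  have href1' : armRef t1 r p' (s+1) = ρ - L * (ρ - p (s+1)) := by
    unfold armRef
    rw [Finset.sum_Ico_succ_top hs, ← add_assoc, hsum s (by omega), hsums, hps, hLdef]
    push_cast
    field_simp
    ring
  have hrefs : armRef t1 r p' s = ρ := href s (by omega)
  have hdiff : armV H ηp ηm t1 T r p' - armV H ηp ηm t1 T r p
      = (armRev H ηp ηm (p (s+1)) ρ + armRev H ηp ηm (p s) (ρ - L * (ρ - p (s+1))))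
        - (armRev H ηp ηm (p s) ρ + armRev H ηp ηm (p (s+1)) (ρ - L * (ρ - p s))) := by
    unfold armV
    rw [← Finset.sum_sub_distrib]
    have hsub : ({s, s+1} : Finset ℕ) ⊆ Finset.Icc t1 T := by
      intro x hx; simp only [Finset.mem_insert, Finset.mem_singleton] at hx
      rcases hx with rfl | rfl <;> rw [Finset.mem_Icc] <;> omega
    rw [← Finset.sum_subset hsub]
    · rw [Finset.sum_pair (by omega : s ≠ s + 1)]
      rw [hps, hps1, hrefs, href1, href1', hρdef]
      ring
    · intro x hx hnx
      simp only [Finset.mem_insert, Finset.mem_singleton, not_or] at hnx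
      rw [hpt x hnx.1 hnx.2, href x hnx.2, sub_self]
  have hcore := ARM.core_ineq H ηp ηm hηm hη (p s) (p (s+1)) ρ L
    (hp s (Finset.mem_Icc.mpr ⟨hs, by omega⟩)) hab hρ0 hL0 hL1
  linarith

noncomputable def ARM.invCount (t1 T : ℕ) (p : ℕ → ℝ) : ℕ :=
  ((Finset.Icc t1 T ×ˢ Finset.Icc t1 T).filter
    (fun ab => ab.1 < ab.2 ∧ p ab.1 < p ab.2)).card

lemma ARM.swap_mem_Icc {t1 T s x : ℕ} (hs : t1 ≤ s) (hsT : s + 1 ≤ T)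
    (hx : x ∈ Finset.Icc t1 T) : Equiv.swap s (s+1) x ∈ Finset.Icc t1 T := by
  rw [Finset.mem_Icc] at *
  rw [Equiv.swap_apply_def]
  split_ifs <;> omega

lemma ARM.invCount_swap_lt (t1 T s : ℕ) (hs : t1 ≤ s) (hsT : s + 1 ≤ T)
    (p : ℕ → ℝ) (hps : p s < p (s + 1)) :
    ARM.invCount t1 T (fun t => p (Equiv.swap s (s+1) t)) < ARM.invCount t1 T p := by
  classical
  set p' : ℕ → ℝ := fun t => p (Equiv.swap s (s+1) t) with hp'
  set S := (Finset.Icc t1 T ×ˢ Finset.Icc t1 T).filter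
      (fun ab => ab.1 < ab.2 ∧ p ab.1 < p ab.2) with hS
  set S' := (Finset.Icc t1 T ×ˢ Finset.Icc t1 T).filter
      (fun ab => ab.1 < ab.2 ∧ p' ab.1 < p' ab.2) with hS'
  have swap_lt : ∀ a b : ℕ, a < b → ¬(a = s ∧ b = s + 1) →
      Equiv.swap s (s+1) a < Equiv.swap s (s+1) b := by
    intro a b hab hne
    rw [Equiv.swap_apply_def, Equiv.swap_apply_def]
    split_ifs <;> omega
  have himg : S'.image (fun ab : ℕ × ℕ => (Equiv.swap s (s+1) ab.1, Equiv.swap s (s+1) ab.2)) ⊆ S := by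
    intro x hx
    rw [Finset.mem_image] at hx
    obtain ⟨⟨a, b⟩, hab, rfl⟩ := hx
    rw [hS', Finset.mem_filter, Finset.mem_product] at hab
    obtain ⟨⟨ha, hb⟩, hlt, hplt⟩ := hab
    have hne : ¬(a = s ∧ b = s + 1) := by
      rintro ⟨rfl, rfl⟩
      simp only [hp'] at hplt
      rw [Equiv.swap_apply_left, Equiv.swap_apply_right] at hplt
      linarith
    rw [hS, Finset.mem_filter, Finset.mem_product]
    exact ⟨⟨ARM.swap_mem_Icc hs hsT ha, ARM.swap_mem_Icc hs hsT hb⟩, swap_lt a b hlt hne, hplt⟩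
  have hmem : (s, s+1) ∈ S := by
    rw [hS, Finset.mem_filter, Finset.mem_product]
    refine ⟨⟨?_, ?_⟩, by omega, hps⟩ <;> rw [Finset.mem_Icc] <;> omega
  have hnotmem : (s, s+1) ∉ S'.image (fun ab : ℕ × ℕ => (Equiv.swap s (s+1) ab.1, Equiv.swap s (s+1) ab.2)) := by
    intro hmem'
    rw [Finset.mem_image] at hmem'
    obtain ⟨⟨a, b⟩, hab, heq⟩ := hmem'
    rw [Prod.mk.injEq] at heq
    have ha : a = s + 1 := by
      have h1 := heq.1
      have h2 : Equiv.swap s (s+1) (Equiv.swap s (s+1) a) = Equiv.swap s (s+1) s := by rw [h1]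
      rwa [Equiv.swap_apply_self, Equiv.swap_apply_left] at h2
    have hb : b = s := by
      have h1 := heq.2
      have h2 : Equiv.swap s (s+1) (Equiv.swap s (s+1) b) = Equiv.swap s (s+1) (s+1) := by rw [h1]
      rwa [Equiv.swap_apply_self, Equiv.swap_apply_right] at h2
    rw [hS', Finset.mem_filter] at hab
    omega
  have hinj : Set.InjOn (fun ab : ℕ × ℕ => (Equiv.swap s (s+1) ab.1, Equiv.swap s (s+1) ab.2)) S' := by
    intro x _ y _ hxy
    rw [Prod.mk.injEq] at hxy
    exact Prod.ext ((Equiv.swap s (s+1)).injective hxy.1) ((Equiv.swap s (s+1)).injective hxy.2)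
  have hcard : S'.card = (S'.image (fun ab : ℕ × ℕ => (Equiv.swap s (s+1) ab.1, Equiv.swap s (s+1) ab.2))).card :=
    (Finset.card_image_of_injOn hinj).symm
  rw [ARM.invCount, ARM.invCount, ← hS, ← hS']
  calc S'.card = _ := hcard
    _ < S.card := Finset.card_lt_card ⟨himg, fun hsub => hnotmem (hsub hmem)⟩

lemma ARM.adjacent_inversion (t1 T : ℕ) (p : ℕ → ℝ) (h : ARM.invCount t1 T p ≠ 0) :
    ∃ s, t1 ≤ s ∧ s + 1 ≤ T ∧ p s < p (s + 1) := by
  by_contra hcon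
  push_neg at hcon
  apply h
  rw [ARM.invCount, Finset.card_eq_zero, Finset.filter_eq_empty_iff]
  rintro ⟨a, b⟩ hab
  rw [Finset.mem_product, Finset.mem_Icc, Finset.mem_Icc] at hab
  rintro ⟨hlt, hplt⟩
  have key : ∀ n, a ≤ n → n ≤ T → p n ≤ p a := by
    intro n hn hnT
    induction n, hn using Nat.le_induction with
    | base => exact le_refl _
    | succ n hn ih =>
        have h1 : p (n+1) ≤ p n := hcon n (le_trans hab.1.1 hn) hnT
        have h2 : p n ≤ p a := ih (by omega)
        linarith
  have := key b hlt.le hab.2.2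
  simp only at hplt this
  linarith

lemma ARM.antitone_of_invCount_zero (t1 T : ℕ) (p : ℕ → ℝ) (h : ARM.invCount t1 T p = 0) :
    AntitoneOn p ↑(Finset.Icc t1 T) := by
  intro a ha b hb hab
  simp only [Finset.coe_Icc, Set.mem_Icc] at ha hb
  rcases eq_or_lt_of_le hab with rfl | hlt
  · exact le_refl _
  by_contra hcon
  push_neg at hcon
  rw [ARM.invCount, Finset.card_eq_zero] at h
  have : (a, b) ∈ ((Finset.Icc t1 T ×ˢ Finset.Icc t1 T).filter
      (fun ab => ab.1 < ab.2 ∧ p ab.1 < p ab.2)) := by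
    rw [Finset.mem_filter, Finset.mem_product, Finset.mem_Icc, Finset.mem_Icc]
    exact ⟨⟨ha, hb⟩, hlt, hcon⟩
  rw [h] at this
  exact absurd this (Finset.notMem_empty _)

lemma ARM.sort_exists (pbar : ℝ) (H : ℝ → ℝ) (ηp ηm : ℝ)
    (hηm : 0 ≤ ηm) (hη : ηm ≤ ηp)
    (t1 T : ℕ) (ht1 : 1 ≤ t1)
    (r : ℝ) (hr : 0 ≤ r) :
    ∀ N (p : ℕ → ℝ), ARM.invCount t1 T p = N →
      (∀ t ∈ Finset.Icc t1 T, p t ∈ Set.Icc 0 pbar) →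
      ∃ σ : Equiv.Perm ℕ,
        (∀ t, t ∉ Finset.Icc t1 T → σ t = t) ∧
        AntitoneOn (fun t => p (σ t)) ↑(Finset.Icc t1 T) ∧
        armV H ηp ηm t1 T r p ≤ armV H ηp ηm t1 T r (fun t => p (σ t)) := by
  intro N
  induction N using Nat.strong_induction_on with
  | _ N ih =>
    intro p hN hvals
    rcases Nat.eq_zero_or_pos N with rfl | hpos
    · refine ⟨Equiv.refl ℕ, fun t _ => rfl, ?_, le_refl _⟩
      simpa using ARM.antitone_of_invCount_zero t1 T p hN
    · obtain ⟨s, hs, hsT, hps⟩ := ARM.adjacent_inversion t1 T p (by omega)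
      set p' : ℕ → ℝ := fun t => p (Equiv.swap s (s+1) t) with hp'def
      have hdec : ARM.invCount t1 T p' < N := hN ▸ ARM.invCount_swap_lt t1 T s hs hsT p hps
      have hvals' : ∀ t ∈ Finset.Icc t1 T, p' t ∈ Set.Icc 0 pbar :=
        fun t ht => hvals _ (ARM.swap_mem_Icc hs hsT ht)
      obtain ⟨σ', hfix', hanti', hle'⟩ := ih _ hdec p' rfl hvals'
      refine ⟨Equiv.swap s (s+1) * σ', ?_, ?_, ?_⟩
      · intro t ht
        have h1 : σ' t = t := hfix' t ht
        have hts : t ≠ s := fun h => ht (h ▸ Finset.mem_Icc.mpr ⟨hs, by omega⟩)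
        have hts1 : t ≠ s + 1 := fun h => ht (h ▸ Finset.mem_Icc.mpr ⟨by omega, hsT⟩)
        rw [Equiv.Perm.mul_apply, h1, Equiv.swap_apply_of_ne_of_ne hts hts1]
      · have : (fun t => p ((Equiv.swap s (s+1) * σ') t)) = fun t => p' (σ' t) := by
          funext t; rw [Equiv.Perm.mul_apply]
        rw [this]
        exact hanti'
      · calc armV H ηp ηm t1 T r p ≤ armV H ηp ηm t1 T r p' :=
              ARM.swap_V H ηp ηm hηm hη t1 T s ht1 hs hsT r hr p
                (fun t ht => (hvals t ht).1) hps.le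
          _ ≤ armV H ηp ηm t1 T r (fun t => p' (σ' t)) := hle'
          _ = armV H ηp ηm t1 T r (fun t => p ((Equiv.swap s (s+1) * σ') t)) := by
              congr 1

lemma ARM.sSup_eq_of (A B : Set ℝ) (hBA : B ⊆ A) (hB : B.Nonempty)
    (hdom : ∀ x ∈ A, ∃ y ∈ B, x ≤ y) : sSup A = sSup B := by
  have hA : A.Nonempty := hB.mono hBA
  by_cases hbdd : BddAbove A
  · apply le_antisymm
    · refine csSup_le hA fun x hx => ?_
      obtain ⟨y, hy, hxy⟩ := hdom x hx
      exact le_trans hxy (le_csSup (hbdd.mono hBA) hy)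
    · exact csSup_le_csSup hbdd hB hBA
  · have hbddB : ¬ BddAbove B := by
      rintro ⟨M, hM⟩
      exact hbdd ⟨M, fun x hx => by
        obtain ⟨y, hy, hxy⟩ := hdom x hx
        exact le_trans hxy (hM hy)⟩
    rw [Real.sSup_of_not_bddAbove hbdd, Real.sSup_of_not_bddAbove hbddB]

/-- For gain-seeking customers (`η⁺ ≥ η⁻ ≥ 0`), the non-increasing rearrangement of any
price sequence yields weakly more revenue, and the optimal value equals the supremum over
non-increasing (markdown) price sequences. -/
theorem gain_seeking_markdown_optimal
    (pbar : ℝ) (hpbar : 0 < pbar) (H : ℝ → ℝ) (ηp ηm : ℝ)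
    (hηm : 0 ≤ ηm) (hη : ηm ≤ ηp)
    (t1 T : ℕ) (ht1 : 1 ≤ t1) (hT : t1 ≤ T)
    (r : ℝ) (hr : r ∈ Set.Icc 0 pbar) :
    (∀ p : ℕ → ℝ, (∀ t ∈ Finset.Icc t1 T, p t ∈ Set.Icc 0 pbar) →
      ∃ σ : Equiv.Perm ℕ,
        (∀ t, t ∉ Finset.Icc t1 T → σ t = t) ∧
        AntitoneOn (fun t => p (σ t)) ↑(Finset.Icc t1 T) ∧
        armV H ηp ηm t1 T r p ≤ armV H ηp ηm t1 T r (fun t => p (σ t))) ∧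
    armVStar H ηp ηm t1 T pbar r =
      sSup {x : ℝ | ∃ q : ℕ → ℝ,
        (∀ t ∈ Finset.Icc t1 T, q t ∈ Set.Icc 0 pbar) ∧
        AntitoneOn q ↑(Finset.Icc t1 T) ∧
        x = armV H ηp ηm t1 T r q} := by
  have part1 : ∀ p : ℕ → ℝ, (∀ t ∈ Finset.Icc t1 T, p t ∈ Set.Icc 0 pbar) →
      ∃ σ : Equiv.Perm ℕ,
        (∀ t, t ∉ Finset.Icc t1 T → σ t = t) ∧
        AntitoneOn (fun t => p (σ t)) ↑(Finset.Icc t1 T) ∧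
        armV H ηp ηm t1 T r p ≤ armV H ηp ηm t1 T r (fun t => p (σ t)) :=
    fun p hp => ARM.sort_exists pbar H ηp ηm hηm hη t1 T ht1 r hr.1
      (ARM.invCount t1 T p) p rfl hp
  refine ⟨part1, ?_⟩
  unfold armVStar
  apply ARM.sSup_eq_of
  · rintro x ⟨q, hq, _, hx⟩
    exact ⟨q, hq, hx⟩
  · refine ⟨armV H ηp ηm t1 T r (fun _ => 0), fun _ => (0:ℝ), ?_, ?_, rfl⟩
    · intro t _; exact ⟨le_refl _, hpbar.le⟩
    · intro a _ b _ _; exact le_refl _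
  · rintro x ⟨p, hp, rfl⟩
    obtain ⟨σ, hfix, hanti, hle⟩ := part1 p hp
    refine ⟨armV H ηp ηm t1 T r (fun t => p (σ t)), ⟨fun t => p (σ t), ?_, hanti, rfl⟩, hle⟩
    intro t ht
    have hσt : σ t ∈ Finset.Icc t1 T := by
      by_contra hσ
      have h1 := hfix (σ t) hσ
      have h2 : σ t = t := σ.injective h1
      rw [h2] at hσ
      exact hσ ht
    exact hp _ hσt
end

section
/- Let η⁺ ≥ η⁻ ≥ 0 and define g(p,r) = p·(η⁺·max(r−p,0) − η⁻·max(p−r,0)). Then for every integer t ≥ 1 and all reals r ≥ 0 and 0 ≤ p ≤ q, one has g(q, r) + g(p, (t·r + q)/(t+1)) ≥ g(p, r) + g(q, (t·r + p)/(t+1)). (This is the key adjacent-swap inequality: under the averaging reference mechanism, exchanging two consecutive out-of-order prices, which replaces the intermediate reference price (t·r+p)/(t+1) by (t·r+q)/(t+1), weakly increases the two affected single-round reference-effect revenue terms, since the base-demand terms p·H(p) + q·H(q) are unchanged.) -/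
set_option maxHeartbeats 1000000

noncomputable def gRef (ηp ηm : ℝ) (p r : ℝ) : ℝ :=
  p * (ηp * max (r - p) 0 - ηm * max (p - r) 0)

lemma gRef_eq (ηp ηm p r : ℝ) :
    gRef ηp ηm p r = p * ((ηp - ηm) * max (r - p) 0 + ηm * (r - p)) := by
  unfold gRef
  rcases le_total r p with h | h
  · rw [max_eq_right (by linarith), max_eq_left (by linarith)]; ring
  · rw [max_eq_left (by linarith), max_eq_right (by linarith)]; ring

lemma keyA (s r p q : ℝ) (hs0 : 0 < s) (hs1 : s ≤ 1)
    (hr : 0 ≤ r) (hp : 0 ≤ p) (hpq : p ≤ q) :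
    p * max (r - p) 0 + q * max (r + s*(p-r) - q) 0 ≤
      q * max (r - q) 0 + p * max (r + s*(q-r) - p) 0 := by
  have hq : 0 ≤ q := le_trans hp hpq
  have hqps : 0 ≤ q - p*s := by nlinarith [mul_nonneg hp (sub_nonneg.2 hs1)]
  rcases max_cases (r-p) 0 with ⟨e1, h1⟩ | ⟨e1, h1⟩ <;>
  rcases max_cases (r-q) 0 with ⟨e2, h2⟩ | ⟨e2, h2⟩ <;>
  rcases max_cases (r + s*(q-r) - p) 0 with ⟨e3, h3⟩ | ⟨e3, h3⟩ <;>
  rcases max_cases (r + s*(p-r) - q) 0 with ⟨e4, h4⟩ | ⟨e4, h4⟩ <;>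
  rw [e1, e2, e3, e4] <;>
  nlinarith [h1, h2, h3, h4, hqps, hp, hq, hr, hs0.le, sub_nonneg.2 hs1,
    sub_nonneg.2 hpq, mul_nonneg hs0.le (sub_nonneg.2 hpq),
    mul_nonneg hs0.le (mul_nonneg hr (sub_nonneg.2 hpq)),
    mul_nonneg hp (sub_nonneg.2 hs1), mul_nonneg hq (sub_nonneg.2 hs1),
    mul_nonneg hp hs0.le, mul_nonneg hq hs0.le]

lemma key (ηp ηm : ℝ) (hηm : 0 ≤ ηm) (hη : ηm ≤ ηp)
    (s r p q : ℝ) (hs0 : 0 < s) (hs1 : s ≤ 1) (hr : 0 ≤ r) (hp : 0 ≤ p) (hpq : p ≤ q) :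
    gRef ηp ηm p r + gRef ηp ηm q (r + s*(p-r)) ≤
      gRef ηp ηm q r + gRef ηp ηm p (r + s*(q-r)) := by
  have ha : 0 ≤ ηp - ηm := by linarith
  have hA := keyA s r p q hs0 hs1 hr hp hpq
  rw [gRef_eq, gRef_eq, gRef_eq, gRef_eq]
  nlinarith [mul_nonneg ha (sub_nonneg.2 hA),
    mul_nonneg (mul_nonneg hηm hs0.le) (mul_nonneg hr (sub_nonneg.2 hpq))]

/-- Adjacent-swap inequality for gain-seeking customers (`η⁺ ≥ η⁻ ≥ 0`): under the
averaging reference mechanism, charging the higher price `q` before the lower price `p`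
(which replaces the intermediate reference price `(t·r+p)/(t+1)` by `(t·r+q)/(t+1)`)
weakly increases the sum of the two affected reference-effect revenue terms. -/
theorem adjacent_swap_inequality
    (ηp ηm : ℝ) (hηm : 0 ≤ ηm) (hη : ηm ≤ ηp)
    (t : ℕ) (ht : 1 ≤ t) (r p q : ℝ) (hr : 0 ≤ r) (hp : 0 ≤ p) (hpq : p ≤ q) :
    gRef ηp ηm p r + gRef ηp ηm q (((t : ℝ) * r + p) / ((t : ℝ) + 1)) ≤
      gRef ηp ηm q r + gRef ηp ηm p (((t : ℝ) * r + q) / ((t : ℝ) + 1)) := by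
  have hT : (1:ℝ) ≤ (t:ℝ) := by exact_mod_cast ht
  have hT1 : (0:ℝ) < (t:ℝ) + 1 := by linarith
  have hs0 : 0 < 1/((t:ℝ)+1) := by positivity
  have hs1 : 1/((t:ℝ)+1) ≤ 1 := by rw [div_le_one hT1]; linarith
  have e1 : ((t : ℝ) * r + p) / ((t : ℝ) + 1) = r + (1/((t:ℝ)+1))*(p-r) := by
    field_simp; ring
  have e2 : ((t : ℝ) * r + q) / ((t : ℝ) + 1) = r + (1/((t:ℝ)+1))*(q-r) := by
    field_simp; ring
  rw [e1, e2]
  exact key ηp ηm hηm hη _ r p q hs0 hs1 hr hp hpq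
end

section
/- Fix integers 1 ≤ t1 ≤ T and loss-averse reference effects η⁻ > η⁺ ≥ 0, and suppose the starting reference price is the price cap: r_{t1} = p̄. Then for every price sequence p = (p_t)_{t=t1}^{T} with values in [0,p̄] there exists a non-increasing rearrangement q of p with V^q(p̄,t1) ≥ V^p(p̄,t1). In particular, the optimal value V*(p̄,t1) equals the supremum of V^q(p̄,t1) over non-increasing sequences q in [0,p̄]^{T−t1+1}. -/
set_option maxHeartbeats 1000000

lemma arm_key (ηp ηm τ r a b : ℝ) (hηp : 0 ≤ ηp) (hη : ηp ≤ ηm) (hτ : 1 ≤ τ)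
    (ha : 0 ≤ a) (hab : a ≤ b) (hbr : b ≤ τ * r) :
    a * (ηp * max (r - a) 0 - ηm * max (a - r) 0)
      + b * (ηp * max ((τ * r + a) / (τ + 1) - b) 0 - ηm * max (b - (τ * r + a) / (τ + 1)) 0)
    ≤ b * (ηp * max (r - b) 0 - ηm * max (b - r) 0)
      + a * (ηp * max ((τ * r + b) / (τ + 1) - a) 0 - ηm * max (a - (τ * r + b) / (τ + 1)) 0) := by
  have hτ0 : (0:ℝ) < τ + 1 := by linarith
  have hτ0' : (τ:ℝ) + 1 ≠ 0 := ne_of_gt hτ0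
  have hηm : 0 ≤ ηm := le_trans hηp hη
  have hr : 0 ≤ r := by nlinarith
  have hb : 0 ≤ b := le_trans ha hab
  rcases le_total r a with h1 | h1
  · -- r ≤ a ≤ b
    have e1 : max (r - a) 0 = 0 := max_eq_right (by linarith)
    have e2 : max (a - r) 0 = a - r := max_eq_left (by linarith)
    have e5 : max (r - b) 0 = 0 := max_eq_right (by linarith)
    have e6 : max (b - r) 0 = b - r := max_eq_left (by linarith)
    have hxb : (τ * r + a) / (τ + 1) ≤ b := by rw [div_le_iff₀ hτ0]; nlinarith
    have e3 : max ((τ * r + a) / (τ + 1) - b) 0 = 0 := max_eq_right (by linarith)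
    have e4 : max (b - (τ * r + a) / (τ + 1)) 0 = b - (τ * r + a) / (τ + 1) :=
      max_eq_left (by linarith)
    have hba : b ≤ τ * a := le_trans hbr (by nlinarith)
    rcases le_total ((τ * r + b) / (τ + 1)) a with h2 | h2
    · have e7 : max ((τ * r + b) / (τ + 1) - a) 0 = 0 := max_eq_right (by linarith)
      have e8 : max (a - (τ * r + b) / (τ + 1)) 0 = a - (τ * r + b) / (τ + 1) :=
        max_eq_left (by linarith)
      rw [e1, e2, e3, e4, e5, e6, e7, e8]
      rw [div_le_iff₀ hτ0] at h2
      field_simp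
      nlinarith [mul_nonneg hηm (mul_nonneg hr (sub_nonneg.2 hab))]
    · have e7 : max ((τ * r + b) / (τ + 1) - a) 0 = (τ * r + b) / (τ + 1) - a :=
        max_eq_left (by linarith)
      have e8 : max (a - (τ * r + b) / (τ + 1)) 0 = 0 := max_eq_right (by linarith)
      rw [e1, e2, e3, e4, e5, e6, e7, e8]
      rw [le_div_iff₀ hτ0] at h2
      field_simp
      nlinarith [mul_nonneg hηm (mul_nonneg (sub_nonneg.2 h1) (by nlinarith : (0:ℝ) ≤ a * (τ + 1) - b)),
        mul_nonneg hηp (mul_nonneg ha (by nlinarith : (0:ℝ) ≤ τ * r + b - a * (τ + 1)))]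
  · rcases le_total r b with h2 | h2
    · -- a ≤ r ≤ b
      have e1 : max (r - a) 0 = r - a := max_eq_left (by linarith)
      have e2 : max (a - r) 0 = 0 := max_eq_right (by linarith)
      have e5 : max (r - b) 0 = 0 := max_eq_right (by linarith)
      have e6 : max (b - r) 0 = b - r := max_eq_left (by linarith)
      have hxb : (τ * r + a) / (τ + 1) ≤ b := by rw [div_le_iff₀ hτ0]; nlinarith
      have e3 : max ((τ * r + a) / (τ + 1) - b) 0 = 0 := max_eq_right (by linarith)
      have e4 : max (b - (τ * r + a) / (τ + 1)) 0 = b - (τ * r + a) / (τ + 1) :=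
        max_eq_left (by linarith)
      have hya : a ≤ (τ * r + b) / (τ + 1) := by rw [le_div_iff₀ hτ0]; nlinarith
      have e7 : max ((τ * r + b) / (τ + 1) - a) 0 = (τ * r + b) / (τ + 1) - a :=
        max_eq_left (by linarith)
      have e8 : max (a - (τ * r + b) / (τ + 1)) 0 = 0 := max_eq_right (by linarith)
      rw [e1, e2, e3, e4, e5, e6, e7, e8]
      field_simp
      nlinarith [mul_nonneg hηp (mul_nonneg ha (sub_nonneg.2 h2)),
        mul_nonneg hηm (mul_nonneg hb (sub_nonneg.2 h1))]
    · -- b ≤ r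
      have e1 : max (r - a) 0 = r - a := max_eq_left (by linarith)
      have e2 : max (a - r) 0 = 0 := max_eq_right (by linarith)
      have e5 : max (r - b) 0 = r - b := max_eq_left (by linarith)
      have e6 : max (b - r) 0 = 0 := max_eq_right (by linarith)
      have hya : a ≤ (τ * r + b) / (τ + 1) := by rw [le_div_iff₀ hτ0]; nlinarith
      have e7 : max ((τ * r + b) / (τ + 1) - a) 0 = (τ * r + b) / (τ + 1) - a :=
        max_eq_left (by linarith)
      have e8 : max (a - (τ * r + b) / (τ + 1)) 0 = 0 := max_eq_right (by linarith)
      rcases le_total ((τ * r + a) / (τ + 1)) b with h3 | h3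
      · have e3 : max ((τ * r + a) / (τ + 1) - b) 0 = 0 := max_eq_right (by linarith)
        have e4 : max (b - (τ * r + a) / (τ + 1)) 0 = b - (τ * r + a) / (τ + 1) :=
          max_eq_left (by linarith)
        rw [e1, e2, e3, e4, e5, e6, e7, e8]
        rw [div_le_iff₀ hτ0] at h3
        field_simp
        nlinarith [mul_nonneg (sub_nonneg.2 hη) (mul_nonneg hb (by nlinarith : (0:ℝ) ≤ b * (τ + 1) - (τ * r + a))),
          mul_nonneg hηp (mul_nonneg hr (sub_nonneg.2 hab))]
      · have e3 : max ((τ * r + a) / (τ + 1) - b) 0 = (τ * r + a) / (τ + 1) - b :=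
          max_eq_left (by linarith)
        have e4 : max (b - (τ * r + a) / (τ + 1)) 0 = 0 := max_eq_right (by linarith)
        rw [e1, e2, e3, e4, e5, e6, e7, e8]
        field_simp
        nlinarith [mul_nonneg hηp (mul_nonneg hr (sub_nonneg.2 hab))]

lemma armRef_swap (t1 t : ℕ) (ht : t1 ≤ t) (r : ℝ) (p : ℕ → ℝ) (u : ℕ) (hu : u ≠ t + 1) :
    armRef t1 r (fun s => p (Equiv.swap t (t+1) s)) u = armRef t1 r p u := by
  unfold armRef
  congr 2
  rcases le_or_gt u t with h | h
  · refine Finset.sum_congr rfl fun s hs => ?_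
    rw [Finset.mem_Ico] at hs
    show p (Equiv.swap t (t+1) s) = p s
    rw [Equiv.swap_apply_of_ne_of_ne (by omega) (by omega)]
  · have hu2 : t + 1 < u := by omega
    refine Finset.sum_equiv (Equiv.swap t (t+1)) (fun i => ?_) (fun i _ => rfl)
    rcases eq_or_ne i t with rfl | h1
    · rw [Equiv.swap_apply_left]; simp only [Finset.mem_Ico]; omega
    rcases eq_or_ne i (t+1) with rfl | h2
    · rw [Equiv.swap_apply_right]; simp only [Finset.mem_Ico]; omega
    · rw [Equiv.swap_apply_of_ne_of_ne h1 h2]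

lemma armRef_succ (t1 : ℕ) (r : ℝ) (p : ℕ → ℝ) (t : ℕ) (ht : t1 ≤ t) (ht0 : t ≠ 0) :
    armRef t1 r p (t+1) = ((t:ℝ) * armRef t1 r p t + p t) / ((t:ℝ)+1) := by
  unfold armRef
  rw [Finset.sum_Ico_succ_top ht]
  have h0 : (t:ℝ) ≠ 0 := Nat.cast_ne_zero.2 ht0
  push_cast
  field_simp
  ring

lemma armRef_mul (t1 : ℕ) (r : ℝ) (p : ℕ → ℝ) (t : ℕ) (ht0 : t ≠ 0) :
    (t:ℝ) * armRef t1 r p t = (t1:ℝ) * r + ∑ s ∈ Finset.Ico t1 t, p s := by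
  unfold armRef
  have h0 : (t:ℝ) ≠ 0 := Nat.cast_ne_zero.2 ht0
  field_simp

lemma armRev_eq (H : ℝ → ℝ) (ηp ηm x ρ : ℝ) :
    armRev H ηp ηm x ρ = x * H x + x * (ηp * max (ρ - x) 0 - ηm * max (x - ρ) 0) := by
  unfold armRev; ring

lemma arm_swap_step (pbar : ℝ) (hpbar : 0 < pbar) (H : ℝ → ℝ) (ηp ηm : ℝ)
    (hηp : 0 ≤ ηp) (hη : ηp ≤ ηm) (t1 T t : ℕ) (ht1 : 1 ≤ t1) (htt : t1 ≤ t) (htT : t < T)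
    (p : ℕ → ℝ) (hp : ∀ u ∈ Finset.Icc t1 T, p u ∈ Set.Icc 0 pbar) (hab : p t ≤ p (t+1)) :
    armV H ηp ηm t1 T pbar p ≤ armV H ηp ηm t1 T pbar (fun s => p (Equiv.swap t (t+1) s)) := by
  set q : ℕ → ℝ := fun s => p (Equiv.swap t (t+1) s) with hqdef
  have ht0 : t ≠ 0 := by omega
  have hτ : (1:ℝ) ≤ (t:ℝ) := by exact_mod_cast Nat.one_le_iff_ne_zero.2 ht0
  have hqt : q t = p (t+1) := by rw [hqdef]; simp [Equiv.swap_apply_left]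
  have hqt1 : q (t+1) = p t := by rw [hqdef]; simp [Equiv.swap_apply_right]
  have hrq : armRef t1 pbar q t = armRef t1 pbar p t := armRef_swap t1 t htt pbar p t (by omega)
  -- key facts about the reference at time t
  set r := armRef t1 pbar p t with hrdef
  have hmul : (t:ℝ) * r = (t1:ℝ) * pbar + ∑ s ∈ Finset.Ico t1 t, p s := armRef_mul t1 pbar p t ht0
  have hsum0 : 0 ≤ ∑ s ∈ Finset.Ico t1 t, p s := by
    refine Finset.sum_nonneg fun s hs => ?_
    rw [Finset.mem_Ico] at hs
    exact (hp s (Finset.mem_Icc.2 ⟨hs.1, by omega⟩)).1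
  have hbr : p (t+1) ≤ (t:ℝ) * r := by
    have h1 : p (t+1) ≤ pbar := (hp (t+1) (Finset.mem_Icc.2 ⟨by omega, by omega⟩)).2
    have h2 : (1:ℝ) ≤ (t1:ℝ) := by exact_mod_cast ht1
    nlinarith
  have ha : 0 ≤ p t := (hp t (Finset.mem_Icc.2 ⟨htt, by omega⟩)).1
  -- rewrite the two sums
  unfold armV
  rw [← sub_nonneg, ← Finset.sum_sub_distrib]
  have hsubset : ({t, t+1} : Finset ℕ) ⊆ Finset.Icc t1 T := by
    intro u hu
    simp only [Finset.mem_insert, Finset.mem_singleton] at hu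
    rcases hu with rfl | rfl <;> simp only [Finset.mem_Icc] <;> omega
  have hzero : ∀ u ∈ Finset.Icc t1 T, u ∉ ({t, t+1} : Finset ℕ) →
      armRev H ηp ηm (q u) (armRef t1 pbar q u) - armRev H ηp ηm (p u) (armRef t1 pbar p u) = 0 := by
    intro u _ hu
    simp only [Finset.mem_insert, Finset.mem_singleton] at hu
    push_neg at hu
    have h1 : q u = p u := by
      rw [hqdef]; show p (Equiv.swap t (t+1) u) = p u
      rw [Equiv.swap_apply_of_ne_of_ne hu.1 hu.2]
    rw [h1, armRef_swap t1 t htt pbar p u hu.2, sub_self]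
  rw [← Finset.sum_subset hsubset hzero, Finset.sum_pair (by omega : t ≠ t + 1)]
  -- now the two-term inequality
  have hr1p : armRef t1 pbar p (t+1) = ((t:ℝ) * r + p t) / ((t:ℝ)+1) :=
    armRef_succ t1 pbar p t htt ht0
  have hr1q : armRef t1 pbar q (t+1) = ((t:ℝ) * r + p (t+1)) / ((t:ℝ)+1) := by
    rw [armRef_succ t1 pbar q t htt ht0, hrq, hqt]
  rw [hrq, hr1p, hr1q, hqt, hqt1]
  rw [armRev_eq, armRev_eq, armRev_eq, armRev_eq]
  have := arm_key ηp ηm (t:ℝ) r (p t) (p (t+1)) hηp hη hτ ha hab hbr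
  linarith

/-- Number of "inversions" (pairs in increasing order) of `p` on `[t1, T]`. -/
noncomputable def armInv (t1 T : ℕ) (p : ℕ → ℝ) : ℕ :=
  ((Finset.Icc t1 T ×ˢ Finset.Icc t1 T).filter
    (fun st => st.1 < st.2 ∧ p st.1 < p st.2)).card

lemma armInv_swap (t1 T t : ℕ) (ht : t1 ≤ t) (htT : t < T) (p : ℕ → ℝ)
    (h : p t < p (t+1)) :
    armInv t1 T (fun s => p (Equiv.swap t (t+1) s)) < armInv t1 T p := by
  classical
  set σ := Equiv.swap t (t+1) with hσ
  have hσt : σ t = t + 1 := Equiv.swap_apply_left _ _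
  have hσt1 : σ (t+1) = t := Equiv.swap_apply_right _ _
  set S := (Finset.Icc t1 T ×ˢ Finset.Icc t1 T).filter
    (fun st => st.1 < st.2 ∧ p st.1 < p st.2) with hS
  set S' := (Finset.Icc t1 T ×ˢ Finset.Icc t1 T).filter
    (fun st => st.1 < st.2 ∧ p (σ st.1) < p (σ st.2)) with hS'
  have hmemIcc : ∀ u : ℕ, u ∈ Finset.Icc t1 T → σ u ∈ Finset.Icc t1 T := by
    intro u hu
    rcases eq_or_ne u t with rfl | h1
    · rw [hσt]; rw [Finset.mem_Icc] at hu ⊢; omega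
    rcases eq_or_ne u (t+1) with rfl | h2
    · rw [hσt1]; rw [Finset.mem_Icc] at hu ⊢; omega
    · rwa [Equiv.swap_apply_of_ne_of_ne h1 h2]
  have hval : ∀ i : ℕ, σ i = i ∨ (i = t ∧ σ i = t + 1) ∨ (i = t + 1 ∧ σ i = t) := by
    intro i
    rcases eq_or_ne i t with h1 | h1
    · right; left; exact ⟨h1, by rw [h1, hσt]⟩
    rcases eq_or_ne i (t+1) with h2 | h2
    · right; right; exact ⟨h2, by rw [h2, hσt1]⟩
    · left; exact Equiv.swap_apply_of_ne_of_ne h1 h2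
  have horder : ∀ st : ℕ × ℕ, st ∈ S' → σ st.1 < σ st.2 := by
    rintro ⟨u, v⟩ hst
    rw [hS', Finset.mem_filter] at hst
    obtain ⟨-, huv, hpv⟩ := hst
    dsimp only at huv hpv ⊢
    have hne : ¬ (u = t ∧ v = t + 1) := by
      rintro ⟨rfl, rfl⟩
      rw [hσt, hσt1] at hpv
      linarith
    rcases hval u with h1 | ⟨h1, h1'⟩ | ⟨h1, h1'⟩ <;>
      rcases hval v with h2 | ⟨h2, h2'⟩ | ⟨h2, h2'⟩ <;> omega
  have hmemS : (t, t+1) ∈ S := by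
    rw [hS, Finset.mem_filter, Finset.mem_product]
    refine ⟨⟨?_, ?_⟩, by omega, h⟩ <;> rw [Finset.mem_Icc] <;> omega
  have hmap : ∀ st ∈ S', (σ st.1, σ st.2) ∈ S.erase (t, t+1) := by
    rintro ⟨u, v⟩ hst
    have horder := horder (u, v) hst
    rw [hS', Finset.mem_filter, Finset.mem_product] at hst
    obtain ⟨⟨hu, hv⟩, huv, hpv⟩ := hst
    refine Finset.mem_erase.2 ⟨?_, ?_⟩
    · intro hcon
      rw [Prod.mk.injEq] at hcon
      have h1 : u = σ t := by rw [← hcon.1]; simp [hσ]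
      have h2 : v = σ (t+1) := by rw [← hcon.2]; simp [hσ]
      rw [hσt] at h1; rw [hσt1] at h2
      dsimp at huv; omega
    · rw [hS, Finset.mem_filter, Finset.mem_product]
      exact ⟨⟨hmemIcc u hu, hmemIcc v hv⟩, horder, hpv⟩
  have hinj : Set.InjOn (fun st : ℕ × ℕ => (σ st.1, σ st.2)) ↑S' := by
    rintro ⟨u, v⟩ - ⟨u', v'⟩ - heq
    rw [Prod.mk.injEq] at heq ⊢
    exact ⟨σ.injective heq.1, σ.injective heq.2⟩
  calc S'.card ≤ (S.erase (t, t+1)).card := Finset.card_le_card_of_injOn _ hmap hinj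
  _ < S.card := Finset.card_erase_lt_of_mem hmemS

lemma anti_of_adj (t1 T : ℕ) (p : ℕ → ℝ) (h : ∀ t, t1 ≤ t → t < T → p (t+1) ≤ p t) :
    AntitoneOn p ↑(Finset.Icc t1 T) := by
  intro u hu v hv huv
  simp only [Finset.coe_Icc, Set.mem_Icc] at hu hv
  have key : ∀ k, u + k ≤ T → p (u + k) ≤ p u := by
    intro k
    induction k with
    | zero => intro _; simp
    | succ k ih =>
      intro h2
      have h3 := h (u + k) (by omega) (by omega)
      have h4 := ih (by omega)
      calc p (u + (k+1)) = p ((u + k) + 1) := by rw [Nat.add_succ]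
      _ ≤ p (u + k) := h3
      _ ≤ p u := h4
  have hv' : v = u + (v - u) := by omega
  rw [hv']
  exact key _ (by omega)

lemma arm_sort (pbar : ℝ) (hpbar : 0 < pbar) (H : ℝ → ℝ) (ηp ηm : ℝ)
    (hηp : 0 ≤ ηp) (hη : ηp ≤ ηm) (t1 T : ℕ) (ht1 : 1 ≤ t1) :
    ∀ (n : ℕ) (p : ℕ → ℝ), (∀ u ∈ Finset.Icc t1 T, p u ∈ Set.Icc 0 pbar) →
    armInv t1 T p ≤ n →
    ∃ σ : Equiv.Perm ℕ, (∀ u, u ∉ Finset.Icc t1 T → σ u = u) ∧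
      AntitoneOn (fun u => p (σ u)) ↑(Finset.Icc t1 T) ∧
      armV H ηp ηm t1 T pbar p ≤ armV H ηp ηm t1 T pbar (fun u => p (σ u)) := by
  intro n
  induction n with
  | zero =>
    intro p hp hn
    refine ⟨1, fun u _ => rfl, ?_, ?_⟩
    · have hadj : ∀ t, t1 ≤ t → t < T → p (t+1) ≤ p t := by
        intro t h1 h2
        by_contra hcon
        push_neg at hcon
        have hmem : (t, t+1) ∈ (Finset.Icc t1 T ×ˢ Finset.Icc t1 T).filter
            (fun st => st.1 < st.2 ∧ p st.1 < p st.2) := by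
          rw [Finset.mem_filter, Finset.mem_product]
          refine ⟨⟨?_, ?_⟩, by omega, hcon⟩ <;> rw [Finset.mem_Icc] <;> omega
        have : 0 < armInv t1 T p := Finset.card_pos.2 ⟨_, hmem⟩
        omega
      exact anti_of_adj t1 T p hadj
    · exact le_rfl
  | succ n ih =>
    intro p hp hn
    by_cases hadj : ∃ t, t1 ≤ t ∧ t < T ∧ p t < p (t+1)
    · obtain ⟨t, htt, htT, hlt⟩ := hadj
      set q : ℕ → ℝ := fun s => p (Equiv.swap t (t+1) s) with hqdef
      have hq : ∀ u ∈ Finset.Icc t1 T, q u ∈ Set.Icc 0 pbar := by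
        intro u hu
        have : Equiv.swap t (t+1) u ∈ Finset.Icc t1 T := by
          rcases eq_or_ne u t with h1 | h1
          · rw [h1, Equiv.swap_apply_left]; rw [Finset.mem_Icc] at hu ⊢; omega
          rcases eq_or_ne u (t+1) with h2 | h2
          · rw [h2, Equiv.swap_apply_right]; rw [Finset.mem_Icc] at hu ⊢; omega
          · rwa [Equiv.swap_apply_of_ne_of_ne h1 h2]
        exact hp _ this
      have hinv : armInv t1 T q ≤ n := by
        have h := armInv_swap t1 T t htt htT p hlt
        rw [← hqdef] at h
        omega
      obtain ⟨σ', hfix', hanti', hle'⟩ := ih q hq hinv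
      refine ⟨Equiv.swap t (t+1) * σ', ?_, ?_, ?_⟩
      · intro u hu
        have h1 : σ' u = u := hfix' u hu
        have h2 : u ≠ t := by rintro rfl; exact hu (Finset.mem_Icc.2 ⟨htt, by omega⟩)
        have h3 : u ≠ t + 1 := by rintro rfl; exact hu (Finset.mem_Icc.2 ⟨by omega, by omega⟩)
        rw [Equiv.Perm.mul_apply, h1, Equiv.swap_apply_of_ne_of_ne h2 h3]
      · have : (fun u => p ((Equiv.swap t (t+1) * σ') u)) = fun u => q (σ' u) := by
          funext u; rw [Equiv.Perm.mul_apply]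
        rw [this]; exact hanti'
      · calc armV H ηp ηm t1 T pbar p ≤ armV H ηp ηm t1 T pbar q :=
              arm_swap_step pbar hpbar H ηp ηm hηp hη t1 T t ht1 htt htT p hp hlt.le
        _ ≤ armV H ηp ηm t1 T pbar (fun u => q (σ' u)) := hle'
        _ = armV H ηp ηm t1 T pbar (fun u => p ((Equiv.swap t (t+1) * σ') u)) := by
              congr 1
    · push_neg at hadj
      exact ⟨1, fun u _ => rfl, anti_of_adj t1 T p hadj, le_rfl⟩

/-- For loss-averse customers (`η⁻ > η⁺ ≥ 0`) starting from reference price `p̄`,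
every price sequence admits a non-increasing rearrangement with weakly more revenue,
and the optimal value from `p̄` equals the supremum over markdown sequences. -/
theorem loss_averse_markdown_optimal_at_cap
    (pbar : ℝ) (hpbar : 0 < pbar) (H : ℝ → ℝ) (ηp ηm : ℝ)
    (hηp : 0 ≤ ηp) (hη : ηp < ηm)
    (t1 T : ℕ) (ht1 : 1 ≤ t1) (hT : t1 ≤ T) :
    (∀ p : ℕ → ℝ, (∀ t ∈ Finset.Icc t1 T, p t ∈ Set.Icc 0 pbar) →
      ∃ σ : Equiv.Perm ℕ,
        (∀ t, t ∉ Finset.Icc t1 T → σ t = t) ∧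
        AntitoneOn (fun t => p (σ t)) ↑(Finset.Icc t1 T) ∧
        armV H ηp ηm t1 T pbar p ≤ armV H ηp ηm t1 T pbar (fun t => p (σ t))) ∧
    armVStar H ηp ηm t1 T pbar pbar =
      sSup {x : ℝ | ∃ q : ℕ → ℝ,
        (∀ t ∈ Finset.Icc t1 T, q t ∈ Set.Icc 0 pbar) ∧
        AntitoneOn q ↑(Finset.Icc t1 T) ∧
        x = armV H ηp ηm t1 T pbar q} := by
  have part1 : ∀ p : ℕ → ℝ, (∀ t ∈ Finset.Icc t1 T, p t ∈ Set.Icc 0 pbar) →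
      ∃ σ : Equiv.Perm ℕ,
        (∀ t, t ∉ Finset.Icc t1 T → σ t = t) ∧
        AntitoneOn (fun t => p (σ t)) ↑(Finset.Icc t1 T) ∧
        armV H ηp ηm t1 T pbar p ≤ armV H ηp ηm t1 T pbar (fun t => p (σ t)) :=
    fun p hp => arm_sort pbar hpbar H ηp ηm hηp hη.le t1 T ht1 (armInv t1 T p) p hp le_rfl
  refine ⟨part1, ?_⟩
  set S : Set ℝ := {x : ℝ | ∃ p : ℕ → ℝ,
    (∀ t ∈ Finset.Icc t1 T, p t ∈ Set.Icc 0 pbar) ∧ x = armV H ηp ηm t1 T pbar p} with hSdef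
  set S' : Set ℝ := {x : ℝ | ∃ q : ℕ → ℝ,
    (∀ t ∈ Finset.Icc t1 T, q t ∈ Set.Icc 0 pbar) ∧
    AntitoneOn q ↑(Finset.Icc t1 T) ∧ x = armV H ηp ηm t1 T pbar q} with hS'def
  have hsub : S' ⊆ S := by
    rintro x ⟨q, hq, -, hx⟩
    exact ⟨q, hq, hx⟩
  have hdom : ∀ x ∈ S, ∃ y ∈ S', x ≤ y := by
    rintro x ⟨p, hp, rfl⟩
    obtain ⟨σ, hfix, hanti, hle⟩ := part1 p hp
    refine ⟨armV H ηp ηm t1 T pbar (fun t => p (σ t)), ⟨fun t => p (σ t), ?_, hanti, rfl⟩, hle⟩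
    intro u hu
    have hσu : σ u ∈ Finset.Icc t1 T := by
      by_contra hcon
      have h1 : σ (σ u) = σ u := hfix _ hcon
      have h2 : σ u = u := σ.injective h1
      rw [h2] at hcon
      exact hcon hu
    exact hp _ hσu
  have hne' : S'.Nonempty := by
    refine ⟨armV H ηp ηm t1 T pbar (fun _ => pbar), fun _ => pbar,
      fun t _ => ⟨hpbar.le, le_rfl⟩, antitoneOn_const, rfl⟩
  show sSup S = sSup S'
  by_cases hbdd : BddAbove S
  · refine le_antisymm ?_ (csSup_le_csSup hbdd hne' hsub)
    refine csSup_le (hne'.mono hsub) ?_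
    intro x hx
    obtain ⟨y, hy, hxy⟩ := hdom x hx
    exact hxy.trans (le_csSup (hbdd.mono hsub) hy)
  · have hbdd' : ¬ BddAbove S' := by
      intro hb
      obtain ⟨M, hM⟩ := hb
      refine hbdd ⟨M, ?_⟩
      intro x hx
      obtain ⟨y, hy, hxy⟩ := hdom x hx
      exact hxy.trans (hM hy)
    rw [Real.sSup_of_not_bddAbove hbdd, Real.sSup_of_not_bddAbove hbdd']
end

section
/- Fix integers 1 ≤ t1 ≤ T and suppose the starting reference price is r_{t1} = p̄. If the price sequence (p_t)_{t=t1}^{T} with values in [0,p̄] is non-increasing, then the induced ARM reference prices satisfy p_t ≤ r_t for every t ∈ {t1,…,T}. Consequently max(p_t − r_t, 0) = 0 for all t, so the total revenue equals Σ_{t=t1}^{T} p_t·(H(p_t) + η⁺·(r_t − p_t)) and does not depend on the loss parameter η⁻. -/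
/-- If the starting reference price is the price cap `p̄` and the price sequence is
non-increasing, then prices never exceed the induced reference prices, the loss term
vanishes, and the total revenue does not depend on the loss parameter `η⁻`. -/
theorem markdown_from_cap_no_loss
    (pbar : ℝ) (hpbar : 0 < pbar) (H : ℝ → ℝ) (ηp ηm : ℝ) (hηp : 0 ≤ ηp) (hηm : 0 ≤ ηm)
    (t1 T : ℕ) (ht1 : 1 ≤ t1) (hT : t1 ≤ T)
    (p : ℕ → ℝ) (hp : ∀ t ∈ Finset.Icc t1 T, p t ∈ Set.Icc 0 pbar)
    (hmono : AntitoneOn p ↑(Finset.Icc t1 T)) :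
    (∀ t ∈ Finset.Icc t1 T, p t ≤ armRef t1 pbar p t) ∧
    (∀ t ∈ Finset.Icc t1 T, max (p t - armRef t1 pbar p t) 0 = 0) ∧
    armV H ηp ηm t1 T pbar p =
      ∑ t ∈ Finset.Icc t1 T, p t * (H (p t) + ηp * (armRef t1 pbar p t - p t)) := by
  have key : ∀ t ∈ Finset.Icc t1 T, p t ≤ armRef t1 pbar p t := by
    intro t ht
    simp only [Finset.mem_Icc] at ht
    have htpos : (0:ℝ) < (t:ℝ) := by
      have : 1 ≤ t := le_trans ht1 ht.1
      exact_mod_cast this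
    rw [armRef, le_div_iff₀ htpos]
    have h1 : (t1:ℝ) * p t ≤ (t1:ℝ) * pbar := by
      have := (hp t (Finset.mem_Icc.mpr ht)).2
      exact mul_le_mul_of_nonneg_left this (by positivity)
    have h2 : ((t - t1 : ℕ):ℝ) * p t ≤ ∑ s ∈ Finset.Ico t1 t, p s := by
      have : ∀ s ∈ Finset.Ico t1 t, p t ≤ p s := by
        intro s hs
        simp only [Finset.mem_Ico] at hs
        exact hmono (by simp [Finset.mem_Icc]; exact ⟨hs.1, le_trans (le_of_lt hs.2) ht.2⟩)
          (by simp [Finset.mem_Icc]; exact ht) (le_of_lt hs.2)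
      calc ((t - t1 : ℕ):ℝ) * p t = ∑ s ∈ Finset.Ico t1 t, p t := by
            rw [Finset.sum_const, Nat.card_Ico, nsmul_eq_mul]
        _ ≤ ∑ s ∈ Finset.Ico t1 t, p s := Finset.sum_le_sum this
    have hcast : ((t - t1 : ℕ):ℝ) = (t:ℝ) - (t1:ℝ) := by
      have : t1 ≤ t := ht.1
      push_cast [this]; ring
    rw [hcast] at h2; nlinarith [h1, h2]
  refine ⟨key, ?_, ?_⟩
  · intro t ht
    have := key t ht
    simp [max_eq_right, sub_nonpos.mpr this]
  · unfold armV armRev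
    apply Finset.sum_congr rfl
    intro t ht
    have h := key t ht
    rw [max_eq_right (sub_nonpos.mpr h), max_eq_left (sub_nonneg.mpr h)]
    ring
end

section
/- Fix integers 1 ≤ t1 ≤ T, parameters η⁺, η⁻ ≥ 0, any base demand function H, any price sequence p ∈ [0,p̄]^{T−t1+1}, and starting reference prices 0 ≤ r ≤ r′ ≤ p̄. Then 0 ≤ V^p(r′, t1) − V^p(r, t1) ≤ p̄ · t1 · (r′ − r) · (η⁺ + η⁻) · Σ_{t=t1}^{T} (1/t). That is, applying a fixed price sequence with a higher starting reference price yields weakly more revenue, and the revenue gap is at most p̄·t1·(r′−r)·(η⁺+η⁻) times the harmonic sum Σ_{t=t1}^{T} 1/t. -/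
lemma armRev_diff (H : ℝ → ℝ) (ηp ηm : ℝ) (hηp : 0 ≤ ηp) (hηm : 0 ≤ ηm)
    (x r1 r2 : ℝ) (hx : 0 ≤ x) (h12 : r1 ≤ r2) :
    0 ≤ armRev H ηp ηm x r2 - armRev H ηp ηm x r1 ∧
    armRev H ηp ηm x r2 - armRev H ηp ηm x r1 ≤ x * (ηp + ηm) * (r2 - r1) := by
  have hA1 : max (r1 - x) 0 ≤ max (r2 - x) 0 := by
    apply max_le_max <;> linarith
  have hA2 : max (r2 - x) 0 ≤ max (r1 - x) 0 + (r2 - r1) := by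
    apply max_le
    · nlinarith [le_max_left (r1 - x) (0:ℝ)]
    · nlinarith [le_max_right (r1 - x) (0:ℝ)]
  have hB1 : max (x - r2) 0 ≤ max (x - r1) 0 := by
    apply max_le_max <;> linarith
  have hB2 : max (x - r1) 0 ≤ max (x - r2) 0 + (r2 - r1) := by
    apply max_le
    · nlinarith [le_max_left (x - r2) (0:ℝ)]
    · nlinarith [le_max_right (x - r2) (0:ℝ)]
  unfold armRev
  have h1 := mul_le_mul_of_nonneg_left hA1 (mul_nonneg hx hηp)
  have h2 := mul_le_mul_of_nonneg_left hB1 (mul_nonneg hx hηm)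
  have h3 := mul_le_mul_of_nonneg_left hA2 (mul_nonneg hx hηp)
  have h4 := mul_le_mul_of_nonneg_left hB2 (mul_nonneg hx hηm)
  constructor
  · nlinarith
  · nlinarith

/-- Applying a fixed price sequence with a higher starting reference price yields weakly
more revenue, and the revenue gap is at most
`p̄·t1·(r′−r)·(η⁺+η⁻)·Σ_{t=t1}^{T} 1/t`. -/
theorem revenue_gap_fixed_policy
    (pbar : ℝ) (hpbar : 0 < pbar) (H : ℝ → ℝ) (ηp ηm : ℝ) (hηp : 0 ≤ ηp) (hηm : 0 ≤ ηm)
    (t1 T : ℕ) (ht1 : 1 ≤ t1) (hT : t1 ≤ T)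
    (p : ℕ → ℝ) (hp : ∀ t ∈ Finset.Icc t1 T, p t ∈ Set.Icc 0 pbar)
    (r r' : ℝ) (hr0 : 0 ≤ r) (hrr' : r ≤ r') (hr' : r' ≤ pbar) :
    0 ≤ armV H ηp ηm t1 T r' p - armV H ηp ηm t1 T r p ∧
    armV H ηp ηm t1 T r' p - armV H ηp ηm t1 T r p ≤
      pbar * (t1 : ℝ) * (r' - r) * (ηp + ηm) * ∑ t ∈ Finset.Icc t1 T, (1 : ℝ) / (t : ℝ) := by
  have key : ∀ t ∈ Finset.Icc t1 T,
      (0 ≤ armRev H ηp ηm (p t) (armRef t1 r' p t) - armRev H ηp ηm (p t) (armRef t1 r p t)) ∧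
      armRev H ηp ηm (p t) (armRef t1 r' p t) - armRev H ηp ηm (p t) (armRef t1 r p t) ≤
        pbar * (t1 : ℝ) * (r' - r) * (ηp + ηm) * ((1 : ℝ) / (t : ℝ)) := by
    intro t ht
    obtain ⟨hpt0, hpt1⟩ := hp t ht
    have htmem := Finset.mem_Icc.mp ht
    have ht1' : (1 : ℝ) ≤ (t : ℝ) := by exact_mod_cast le_trans ht1 htmem.1
    have htpos : (0 : ℝ) < (t : ℝ) := by linarith
    have hdiff : armRef t1 r' p t - armRef t1 r p t = (t1 : ℝ) * (r' - r) / (t : ℝ) := by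
      unfold armRef
      field_simp
      ring
    have hle : armRef t1 r p t ≤ armRef t1 r' p t := by
      nlinarith [div_nonneg (mul_nonneg (Nat.cast_nonneg t1 : (0:ℝ) ≤ t1) (by linarith : (0:ℝ) ≤ r' - r)) htpos.le]
    obtain ⟨h1, h2⟩ := armRev_diff H ηp ηm hηp hηm (p t) _ _ hpt0 hle
    refine ⟨h1, h2.trans ?_⟩
    rw [hdiff]
    have ht1nn : (0:ℝ) ≤ (t1:ℝ) := Nat.cast_nonneg t1
    have hinv : (0:ℝ) ≤ 1 / (t:ℝ) := by positivity
    have : p t * (ηp + ηm) * ((t1:ℝ) * (r' - r) / (t:ℝ))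
        = p t * (t1:ℝ) * (r' - r) * (ηp + ηm) * (1 / (t:ℝ)) := by ring
    rw [this]
    have hfac : (0:ℝ) ≤ (t1:ℝ) * (r' - r) * (ηp + ηm) * (1 / (t:ℝ)) := by
      have hrr : (0:ℝ) ≤ r' - r := by linarith
      positivity
    nlinarith [mul_nonneg (by linarith : (0:ℝ) ≤ pbar - p t) hfac]
  constructor
  · have := Finset.sum_sub_distrib (s := Finset.Icc t1 T)
      (f := fun t => armRev H ηp ηm (p t) (armRef t1 r' p t))
      (g := fun t => armRev H ηp ηm (p t) (armRef t1 r p t))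
    unfold armV
    rw [← Finset.sum_sub_distrib]
    exact Finset.sum_nonneg fun t ht => (key t ht).1
  · unfold armV
    rw [← Finset.sum_sub_distrib, Finset.mul_sum]
    exact Finset.sum_le_sum fun t ht => (key t ht).2
end

section
/- Fix integers 1 ≤ t1 ≤ T and parameters η⁺, η⁻ ≥ 0, and suppose the base demand H is bounded on [0,p̄]. Then the optimal revenue V*(·, t1) is non-decreasing in the starting reference price, and for all 0 ≤ r ≤ r′ ≤ p̄ it satisfies the Lipschitz-type bound 0 ≤ V*(r′, t1) − V*(r, t1) ≤ p̄ · t1 · (r′ − r) · (η⁺ + η⁻) · Σ_{t=t1}^{T} (1/t). -/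
/-- The optimal revenue `V*(·, t1)` is non-decreasing in the starting reference price and
satisfies the Lipschitz-type bound
`V*(r′,t1) − V*(r,t1) ≤ p̄·t1·(r′−r)·(η⁺+η⁻)·Σ_{t=t1}^{T} 1/t`. -/
theorem optimal_revenue_gap_in_reference
    (pbar : ℝ) (hpbar : 0 < pbar) (H : ℝ → ℝ)
    (hH : ∃ C : ℝ, ∀ x ∈ Set.Icc (0 : ℝ) pbar, |H x| ≤ C)
    (ηp ηm : ℝ) (hηp : 0 ≤ ηp) (hηm : 0 ≤ ηm)
    (t1 T : ℕ) (ht1 : 1 ≤ t1) (hT : t1 ≤ T) :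
    ∀ r r' : ℝ, 0 ≤ r → r ≤ r' → r' ≤ pbar →
      armVStar H ηp ηm t1 T pbar r ≤ armVStar H ηp ηm t1 T pbar r' ∧
      armVStar H ηp ηm t1 T pbar r' - armVStar H ηp ηm t1 T pbar r ≤
        pbar * (t1 : ℝ) * (r' - r) * (ηp + ηm) * ∑ t ∈ Finset.Icc t1 T, (1 : ℝ) / (t : ℝ) := by
  intro r r' hr hrr' hr'pb
  obtain ⟨C, hC⟩ := hH
  have hpb0 : (0:ℝ) ≤ pbar := hpbar.le
  have hC0 : 0 ≤ C := le_trans (abs_nonneg _) (hC 0 ⟨le_refl 0, hpb0⟩)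
  -- single-round monotonicity and Lipschitz bound in the reference price
  have rev_key : ∀ x a b : ℝ, 0 ≤ x → x ≤ pbar → a ≤ b →
      armRev H ηp ηm x a ≤ armRev H ηp ηm x b ∧
      armRev H ηp ηm x b - armRev H ηp ηm x a ≤ pbar * (ηp + ηm) * (b - a) := by
    intro x a b hx hxpb hab
    set D1 := max (b - x) 0 - max (a - x) 0 with hD1
    set D2 := max (x - a) 0 - max (x - b) 0 with hD2
    have hD1nn : 0 ≤ D1 := sub_nonneg.mpr (max_le_max (by linarith) le_rfl)
    have hD2nn : 0 ≤ D2 := sub_nonneg.mpr (max_le_max (by linarith) le_rfl)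
    have hD1le : D1 ≤ b - a := by
      have h := abs_max_sub_max_le_abs (b - x) (a - x) 0
      have h2 : |(b - x) - (a - x)| = b - a := by
        rw [show (b - x) - (a - x) = b - a by ring]; exact abs_of_nonneg (by linarith)
      calc D1 ≤ |max (b - x) 0 - max (a - x) 0| := le_abs_self _
        _ ≤ |(b - x) - (a - x)| := h
        _ = b - a := h2
    have hD2le : D2 ≤ b - a := by
      have h := abs_max_sub_max_le_abs (x - a) (x - b) 0
      have h2 : |(x - a) - (x - b)| = b - a := by
        rw [show (x - a) - (x - b) = b - a by ring]; exact abs_of_nonneg (by linarith)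
      calc D2 ≤ |max (x - a) 0 - max (x - b) 0| := le_abs_self _
        _ ≤ |(x - a) - (x - b)| := h
        _ = b - a := h2
    have hdiff : armRev H ηp ηm x b - armRev H ηp ηm x a = x * (ηp * D1 + ηm * D2) := by
      unfold armRev; rw [hD1, hD2]; ring
    have hsum_nn : 0 ≤ ηp * D1 + ηm * D2 :=
      add_nonneg (mul_nonneg hηp hD1nn) (mul_nonneg hηm hD2nn)
    have hsum_le : ηp * D1 + ηm * D2 ≤ (ηp + ηm) * (b - a) := by nlinarith
    constructor
    · nlinarith [mul_nonneg hx hsum_nn]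
    · rw [hdiff]
      calc x * (ηp * D1 + ηm * D2) ≤ pbar * ((ηp + ηm) * (b - a)) :=
            mul_le_mul hxpb hsum_le hsum_nn hpb0
        _ = pbar * (ηp + ηm) * (b - a) := by ring
  -- upper bound on single-round revenue
  have rev_ub : ∀ x ρ : ℝ, 0 ≤ x → x ≤ pbar → 0 ≤ ρ → ρ ≤ pbar →
      armRev H ηp ηm x ρ ≤ pbar * (C + ηp * pbar) := by
    intro x ρ hx hxpb hρ hρpb
    have hHx : H x ≤ C := le_trans (le_abs_self _) (hC x ⟨hx, hxpb⟩)
    have hm1 : max (ρ - x) 0 ≤ pbar := max_le (by linarith) hpb0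
    have hm1nn : 0 ≤ max (ρ - x) 0 := le_max_right _ _
    have hm2nn : 0 ≤ max (x - ρ) 0 := le_max_right _ _
    have hinner : H x + ηp * max (ρ - x) 0 - ηm * max (x - ρ) 0 ≤ C + ηp * pbar := by
      nlinarith [mul_le_mul_of_nonneg_left hm1 hηp, mul_nonneg hηm hm2nn]
    unfold armRev
    rcases le_or_gt (H x + ηp * max (ρ - x) 0 - ηm * max (x - ρ) 0) 0 with h | h
    · have : x * (H x + ηp * max (ρ - x) 0 - ηm * max (x - ρ) 0) ≤ 0 :=
        mul_nonpos_of_nonneg_of_nonpos hx h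
      nlinarith [mul_nonneg hpb0 (add_nonneg hC0 (mul_nonneg hηp hpb0))]
    · exact mul_le_mul hxpb hinner h.le hpb0
  -- reference prices stay in [0, pbar]
  have ref_mem : ∀ ρ : ℝ, 0 ≤ ρ → ρ ≤ pbar → ∀ p : ℕ → ℝ,
      (∀ t ∈ Finset.Icc t1 T, p t ∈ Set.Icc 0 pbar) →
      ∀ t ∈ Finset.Icc t1 T, 0 ≤ armRef t1 ρ p t ∧ armRef t1 ρ p t ≤ pbar := by
    intro ρ hρ hρpb p hp t ht
    rw [Finset.mem_Icc] at ht
    have htpos : (0:ℝ) < (t:ℝ) := by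
      have : 1 ≤ t := le_trans ht1 ht.1
      exact_mod_cast Nat.lt_of_lt_of_le Nat.zero_lt_one this
    have hmem : ∀ s ∈ Finset.Ico t1 t, p s ∈ Set.Icc 0 pbar := by
      intro s hs
      rw [Finset.mem_Ico] at hs
      exact hp s (Finset.mem_Icc.mpr ⟨hs.1, le_trans (Nat.le_of_lt_succ (Nat.lt_succ_of_lt hs.2)) ht.2⟩)
    have hsum_nn : 0 ≤ ∑ s ∈ Finset.Ico t1 t, p s :=
      Finset.sum_nonneg fun s hs => (hmem s hs).1
    have hsum_le : ∑ s ∈ Finset.Ico t1 t, p s ≤ ((t:ℝ) - (t1:ℝ)) * pbar := by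
      calc ∑ s ∈ Finset.Ico t1 t, p s ≤ ∑ _s ∈ Finset.Ico t1 t, pbar :=
            Finset.sum_le_sum fun s hs => (hmem s hs).2
        _ = ((Finset.Ico t1 t).card : ℝ) * pbar := by rw [Finset.sum_const, nsmul_eq_mul]
        _ = ((t:ℝ) - (t1:ℝ)) * pbar := by
            rw [Nat.card_Ico]
            rcases le_or_gt t1 t with h | h
            · rw [Nat.cast_sub h]
            · rw [Nat.sub_eq_zero_of_le h.le]
              have : (t:ℝ) ≤ (t1:ℝ) := by exact_mod_cast h.le
              simp only [Nat.cast_zero]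
              nlinarith
    constructor
    · unfold armRef
      apply div_nonneg _ htpos.le
      have : 0 ≤ (t1:ℝ) * ρ := mul_nonneg (Nat.cast_nonneg _) hρ
      linarith
    · unfold armRef
      rw [div_le_iff₀ htpos]
      have h1 : (t1:ℝ) * ρ ≤ (t1:ℝ) * pbar :=
        mul_le_mul_of_nonneg_left hρpb (Nat.cast_nonneg _)
      nlinarith
  -- the difference of reference prices
  have ref_diff : ∀ p : ℕ → ℝ, ∀ t : ℕ, t1 ≤ t →
      armRef t1 r' p t - armRef t1 r p t = (t1:ℝ) * (r' - r) / (t:ℝ) := by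
    intro p t ht
    unfold armRef
    rw [div_sub_div_same]
    congr 1
    ring
  -- set the Lipschitz constant
  set B : ℝ := pbar * (t1:ℝ) * (r' - r) * (ηp + ηm) * ∑ t ∈ Finset.Icc t1 T, (1:ℝ) / (t:ℝ)
    with hB
  -- total revenue: monotone and Lipschitz in r
  have V_key : ∀ p : ℕ → ℝ, (∀ t ∈ Finset.Icc t1 T, p t ∈ Set.Icc 0 pbar) →
      armV H ηp ηm t1 T r p ≤ armV H ηp ηm t1 T r' p ∧
      armV H ηp ηm t1 T r' p - armV H ηp ηm t1 T r p ≤ B := by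
    intro p hp
    have key : ∀ t ∈ Finset.Icc t1 T,
        armRev H ηp ηm (p t) (armRef t1 r p t) ≤ armRev H ηp ηm (p t) (armRef t1 r' p t) ∧
        armRev H ηp ηm (p t) (armRef t1 r' p t) - armRev H ηp ηm (p t) (armRef t1 r p t) ≤
          pbar * (t1:ℝ) * (r' - r) * (ηp + ηm) * ((1:ℝ) / (t:ℝ)) := by
      intro t ht
      have ht' := Finset.mem_Icc.mp ht
      have hdr : armRef t1 r' p t - armRef t1 r p t = (t1:ℝ) * (r' - r) / (t:ℝ) :=
        ref_diff p t ht'.1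
      have htpos : (0:ℝ) < (t:ℝ) := by
        have : 1 ≤ t := le_trans ht1 ht'.1
        exact_mod_cast Nat.lt_of_lt_of_le Nat.zero_lt_one this
      have hdrnn : 0 ≤ (t1:ℝ) * (r' - r) / (t:ℝ) :=
        div_nonneg (mul_nonneg (Nat.cast_nonneg _) (by linarith)) htpos.le
      have hab : armRef t1 r p t ≤ armRef t1 r' p t := by linarith
      obtain ⟨h1, h2⟩ := rev_key (p t) (armRef t1 r p t) (armRef t1 r' p t)
        (hp t ht).1 (hp t ht).2 hab
      refine ⟨h1, ?_⟩
      calc armRev H ηp ηm (p t) (armRef t1 r' p t) - armRev H ηp ηm (p t) (armRef t1 r p t)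
          ≤ pbar * (ηp + ηm) * (armRef t1 r' p t - armRef t1 r p t) := h2
        _ = pbar * (ηp + ηm) * ((t1:ℝ) * (r' - r) / (t:ℝ)) := by rw [hdr]
        _ = pbar * (t1:ℝ) * (r' - r) * (ηp + ηm) * ((1:ℝ) / (t:ℝ)) := by ring
    constructor
    · exact Finset.sum_le_sum fun t ht => (key t ht).1
    · unfold armV
      rw [← Finset.sum_sub_distrib, hB, Finset.mul_sum]
      exact Finset.sum_le_sum fun t ht => (key t ht).2
  -- the feasible sets
  have set_ne : ∀ ρ : ℝ, ({x : ℝ | ∃ p : ℕ → ℝ,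
      (∀ t ∈ Finset.Icc t1 T, p t ∈ Set.Icc 0 pbar) ∧
      x = armV H ηp ηm t1 T ρ p}).Nonempty := by
    intro ρ
    exact ⟨armV H ηp ηm t1 T ρ (fun _ => 0), fun _ => 0,
      fun t _ => ⟨le_refl 0, hpb0⟩, rfl⟩
  have set_bdd : ∀ ρ : ℝ, 0 ≤ ρ → ρ ≤ pbar → BddAbove {x : ℝ | ∃ p : ℕ → ℝ,
      (∀ t ∈ Finset.Icc t1 T, p t ∈ Set.Icc 0 pbar) ∧
      x = armV H ηp ηm t1 T ρ p} := by
    intro ρ hρ hρpb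
    refine ⟨((Finset.Icc t1 T).card : ℝ) * (pbar * (C + ηp * pbar)), ?_⟩
    rintro x ⟨p, hp, rfl⟩
    unfold armV
    calc ∑ t ∈ Finset.Icc t1 T, armRev H ηp ηm (p t) (armRef t1 ρ p t)
        ≤ ∑ _t ∈ Finset.Icc t1 T, pbar * (C + ηp * pbar) := by
          apply Finset.sum_le_sum
          intro t ht
          obtain ⟨h1, h2⟩ := ref_mem ρ hρ hρpb p hp t ht
          exact rev_ub (p t) (armRef t1 ρ p t) (hp t ht).1 (hp t ht).2 h1 h2
      _ = ((Finset.Icc t1 T).card : ℝ) * (pbar * (C + ηp * pbar)) := by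
          rw [Finset.sum_const, nsmul_eq_mul]
  have hr0 : 0 ≤ r := hr
  have hrpb : r ≤ pbar := le_trans hrr' hr'pb
  have hr'0 : 0 ≤ r' := le_trans hr hrr'
  constructor
  · apply csSup_le (set_ne r)
    rintro x ⟨p, hp, rfl⟩
    exact le_trans (V_key p hp).1 (le_csSup (set_bdd r' hr'0 hr'pb) ⟨p, hp, rfl⟩)
  · rw [sub_le_iff_le_add]
    rw [show B + armVStar H ηp ηm t1 T pbar r = armVStar H ηp ηm t1 T pbar r + B by ring]
    apply csSup_le (set_ne r')
    rintro x ⟨p, hp, rfl⟩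
    have h1 := (V_key p hp).2
    have h2 : armV H ηp ηm t1 T r p ≤ armVStar H ηp ηm t1 T pbar r :=
      le_csSup (set_bdd r hr0 hrpb) ⟨p, hp, rfl⟩
    unfold armVStar at h2 ⊢
    linarith
end

section
/- Fix integers 1 ≤ t1 ≤ T, parameters η⁺, η⁻ ≥ 0, a continuous base demand H on [0,p̄], and any starting reference price r ∈ [0,p̄]. Then there exists a non-increasing (markdown) price sequence q ∈ [0,p̄]^{T−t1+1} such that V*(r, t1) − V^q(r, t1) ≤ p̄ · t1 · (p̄ − r) · (η⁺ + η⁻) · Σ_{t=t1}^{T} (1/t). In particular, for t1 = 1, markdown pricing is near-optimal with revenue loss at most p̄·(p̄ − r)·(η⁺ + η⁻)·Σ_{t=1}^{T} 1/t = O(p̄·(p̄−r)·(η⁺+η⁻)·ln T). -/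
noncomputable def VL (H : ℝ → ℝ) (ηp ηm : ℝ) : ℕ → ℝ → List ℝ → ℝ
  | _, _, [] => 0
  | t1, r, x :: xs =>
      armRev H ηp ηm x r + VL H ηp ηm (t1+1) (((t1:ℝ) * r + x)/((t1:ℝ)+1)) xs

noncomputable def harmSum : ℕ → ℕ → ℝ
  | _, 0 => 0
  | t1, n+1 => 1/(t1:ℝ) + harmSum (t1+1) n

lemma harmSum_nonneg : ∀ (n t1 : ℕ), 0 ≤ harmSum t1 n
  | 0, _ => le_refl 0
  | n+1, t1 => by
    have := harmSum_nonneg n (t1+1)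
    simp only [harmSum]
    positivity

lemma arm_star (H : ℝ → ℝ) (ηp ηm : ℝ) (hp : 0 ≤ ηp) (hm : 0 ≤ ηm)
    (s r a m : ℝ) (hs : 1 ≤ s) (hr : 0 ≤ r) (ha : 0 ≤ a) (ham : a ≤ m) :
    armRev H ηp ηm a r + armRev H ηp ηm m ((s*r+a)/(s+1))
      + ηm * m * max (m - (s*r+a)/(s+1)) 0 ≤
    armRev H ηp ηm m r + armRev H ηp ηm a ((s*r+m)/(s+1))
      + ηm * m * max (m - r) 0 := by
  have hs1 : (0:ℝ) < s + 1 := by linarith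
  set u := (s*r+a)/(s+1) with hu_def
  set v := (s*r+m)/(s+1) with hv_def
  have hu : (s+1) * u = s*r + a := by rw [hu_def]; exact mul_div_cancel₀ _ hs1.ne'
  have hv : (s+1) * v = s*r + m := by rw [hv_def]; exact mul_div_cancel₀ _ hs1.ne'
  have h0m : 0 ≤ m := ha.trans ham
  -- key1 : (a - v)⁺ ≤ (a - r)⁺
  have key1 : max (a - v) 0 ≤ max (a - r) 0 := by
    rcases le_total r m with h | h
    · have hrv : r ≤ v := by nlinarith
      exact max_le_max (by linarith) le_rfl
    · have hmv : m ≤ v := by nlinarith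
      calc max (a - v) 0 = 0 := max_eq_right (by linarith)
        _ ≤ max (a - r) 0 := le_max_right _ _
  -- key2
  have key2 : a * max (r-a) 0 + m * max (u-m) 0 ≤ a * max (v-a) 0 + m * max (r-m) 0 := by
    rcases le_total r m with h | h
    · have hum : u ≤ m := by nlinarith
      have hrv : r ≤ v := by nlinarith
      have h1 : max (u - m) 0 = 0 := max_eq_right (by linarith)
      have h2 : max (r-a) 0 ≤ max (v-a) 0 := max_le_max (by linarith) le_rfl
      have h3 : a * max (r-a) 0 ≤ a * max (v-a) 0 := mul_le_mul_of_nonneg_left h2 ha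
      have h4 : 0 ≤ m * max (r-m) 0 := mul_nonneg h0m (le_max_right _ _)
      rw [h1]; linarith
    · -- m ≤ r
      have hmv : m ≤ v := by nlinarith
      have hav : a ≤ v := ham.trans hmv
      have h1 : max (r-a) 0 = r-a := max_eq_left (by linarith)
      have h2 : max (r-m) 0 = r-m := max_eq_left (by linarith)
      have h3 : max (v-a) 0 = v-a := max_eq_left (by linarith)
      have hw : (s+1) * max (u-m) 0 ≤ s * (r-m) := by
        rcases le_total (u-m) 0 with h' | h'
        · rw [max_eq_right h']; nlinarith
        · rw [max_eq_left h']; nlinarith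
      have hw0 : 0 ≤ max (u-m) 0 := le_max_right _ _
      rw [h1, h2, h3]
      nlinarith [mul_le_mul_of_nonneg_left hw h0m,
        mul_le_mul_of_nonneg_right ham (sub_nonneg.2 h),
        mul_nonneg ha (sub_nonneg.2 h)]
  have h1' : a * (ηm * max (a-v) 0) ≤ a * (ηm * max (a-r) 0) :=
    mul_le_mul_of_nonneg_left (mul_le_mul_of_nonneg_left key1 hm) ha
  have h2' : ηp * (a * max (r-a) 0 + m * max (u-m) 0)
      ≤ ηp * (a * max (v-a) 0 + m * max (r-m) 0) := mul_le_mul_of_nonneg_left key2 hp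
  simp only [armRev]
  nlinarith [h1', h2']

lemma arm_moveMax (H : ℝ → ℝ) (ηp ηm : ℝ) (hp : 0 ≤ ηp) (hm : 0 ≤ ηm) (m : ℝ) (h0m : 0 ≤ m) :
    ∀ (A B : List ℝ) (t1 : ℕ) (r : ℝ), 1 ≤ t1 → 0 ≤ r → (∀ x ∈ A, 0 ≤ x ∧ x ≤ m) →
    VL H ηp ηm t1 r (A ++ m :: B) ≤ VL H ηp ηm t1 r (m :: (A ++ B)) + ηm * m * max (m - r) 0 := by
  intro A
  induction A with
  | nil =>
    intro B t1 r ht1 hr _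
    have : 0 ≤ ηm * m * max (m - r) 0 := by positivity
    simp only [List.nil_append]
    linarith
  | cons a A ih =>
    intro B t1 r ht1 hr hA
    have ha := hA a List.mem_cons_self
    have hs : (1:ℝ) ≤ (t1:ℝ) := by exact_mod_cast ht1
    have hs1 : (0:ℝ) < (t1:ℝ) + 1 := by linarith
    have hra : 0 ≤ ((t1:ℝ)*r+a)/((t1:ℝ)+1) := div_nonneg (by nlinarith) hs1.le
    have hIH := ih B (t1+1) (((t1:ℝ)*r+a)/((t1:ℝ)+1)) (by omega) hra
      (fun x hx => hA x (List.mem_cons_of_mem a hx))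
    have hstar := arm_star H ηp ηm hp hm (t1:ℝ) r a m hs hr ha.1 ha.2
    have castt : ((t1 + 1 : ℕ) : ℝ) = (t1:ℝ) + 1 := by push_cast; ring
    simp only [List.cons_append, VL, castt, List.append_eq] at hIH ⊢
    have hnum1 : (((t1:ℝ)+1) * (((t1:ℝ)*r+a)/((t1:ℝ)+1)) + m)/(((t1:ℝ)+1)+1)
        = ((t1:ℝ)*r+a+m)/((t1:ℝ)+2) := by
      rw [mul_div_cancel₀ _ hs1.ne']; ring_nf
    have hnum2 : (((t1:ℝ)+1) * (((t1:ℝ)*r+m)/((t1:ℝ)+1)) + a)/(((t1:ℝ)+1)+1)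
        = ((t1:ℝ)*r+a+m)/((t1:ℝ)+2) := by
      rw [mul_div_cancel₀ _ hs1.ne']; ring_nf
    rw [hnum1] at hIH
    rw [hnum2]
    linarith

set_option maxHeartbeats 2000000 in
lemma arm_sortMain (H : ℝ → ℝ) (ηp ηm : ℝ) (hp : 0 ≤ ηp) (hm : 0 ≤ ηm) :
    ∀ (n : ℕ) (L : List ℝ), L.length = n → ∀ (c : ℝ) (t1 : ℕ) (r : ℝ),
    1 ≤ t1 → 0 ≤ r → 0 ≤ c → (∀ x ∈ L, 0 ≤ x ∧ x ≤ c) →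
    ∃ Q : List ℝ, Q.Perm L ∧ Q.Pairwise (· ≥ ·) ∧
      VL H ηp ηm t1 r L ≤ VL H ηp ηm t1 r Q +
        ηm * c * max (c - r) 0 * (t1 : ℝ) * harmSum t1 n := by
  intro n
  induction n with
  | zero =>
    intro L hlen c t1 r ht1 hr hc hL
    rw [List.length_eq_zero_iff] at hlen
    subst hlen
    exact ⟨[], List.Perm.refl _, List.Pairwise.nil, by simp [harmSum]⟩
  | succ n ih =>
    intro L hlen c t1 r ht1 hr hc hL
    have hpos : 0 < L.length := by omega
    set m := L.maximum_of_length_pos hpos with hm_def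
    have hmem : m ∈ L := List.maximum_of_length_pos_mem hpos
    have hmax : ∀ x ∈ L, x ≤ m := fun x hx => List.le_maximum_of_length_pos_of_mem hx hpos
    obtain ⟨A, B, hAB⟩ := List.append_of_mem hmem
    have h0m : 0 ≤ m := (hL m hmem).1
    have hmc : m ≤ c := (hL m hmem).2
    have hs : (1:ℝ) ≤ (t1:ℝ) := by exact_mod_cast ht1
    have hs1 : (0:ℝ) < (t1:ℝ) + 1 := by linarith
    set r' := ((t1:ℝ)*r + m)/((t1:ℝ)+1) with hr'_def
    have hr' : 0 ≤ r' := div_nonneg (by nlinarith) hs1.le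
    have hlen' : (A ++ B).length = n := by
      have := hlen
      rw [hAB] at this
      simp at this ⊢
      omega
    have hABsub : ∀ x ∈ A ++ B, x ∈ L := by
      intro x hx
      rw [hAB]
      rcases List.mem_append.1 hx with h | h
      · exact List.mem_append.2 (Or.inl h)
      · exact List.mem_append.2 (Or.inr (List.mem_cons_of_mem m h))
    obtain ⟨Q', hperm', hsort', hineq'⟩ := ih (A ++ B) hlen' m (t1+1) r' (by omega) hr' h0m
      (fun x hx => ⟨(hL x (hABsub x hx)).1, hmax x (hABsub x hx)⟩)
    have hApre : ∀ x ∈ A, 0 ≤ x ∧ x ≤ m := by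
      intro x hx
      have hxL : x ∈ L := by rw [hAB]; exact List.mem_append.2 (Or.inl hx)
      exact ⟨(hL x hxL).1, hmax x hxL⟩
    have hmove := arm_moveMax H ηp ηm hp hm m h0m A B t1 r ht1 hr hApre
    have castt : ((t1 + 1 : ℕ) : ℝ) = (t1:ℝ) + 1 := by push_cast; ring
    rw [castt] at hineq'
    have ht0 : (t1:ℝ) ≠ 0 := by linarith
    have eq1 : VL H ηp ηm t1 r (m :: (A ++ B))
        = armRev H ηp ηm m r + VL H ηp ηm (t1+1) r' (A ++ B) := by
      simp only [VL, hr'_def]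
    have eq2 : VL H ηp ηm t1 r (m :: Q')
        = armRev H ηp ηm m r + VL H ηp ηm (t1+1) r' Q' := by
      simp only [VL, hr'_def]
    have hh' : 0 ≤ harmSum (t1+1) n := harmSum_nonneg n (t1+1)
    have hX0 : 0 ≤ max (m - r) 0 := le_max_right _ _
    have hY0 : 0 ≤ max (c - r) 0 := le_max_right _ _
    have hXY : max (m - r) 0 ≤ max (c - r) 0 := max_le_max (by linarith) le_rfl
    have subA : ηm * m * max (m - r) 0 ≤ ηm * c * max (c - r) 0 := by
      nlinarith [mul_le_mul hmc hXY hX0 hc]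
    have subB : ηm * m * max (m - r') 0 * ((t1:ℝ)+1) ≤ ηm * c * max (c - r) 0 * (t1:ℝ) := by
      rcases le_total m r' with hmr' | hmr'
      · have : max (m - r') 0 = 0 := max_eq_right (by linarith)
        rw [this]
        have : 0 ≤ ηm * c * max (c - r) 0 * (t1:ℝ) := by positivity
        linarith
      · have hmx : max (m - r') 0 = m - r' := max_eq_left (by linarith)
        have key : ((t1:ℝ)+1) * (m - r') = (t1:ℝ) * (m - r) := by
          rw [hr'_def]; field_simp; ring
        have hmr : 0 ≤ m - r := by nlinarith
        have hcr : max (c - r) 0 = c - r := max_eq_left (by linarith)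
        rw [hmx, hcr]
        have e : ηm * m * (((t1:ℝ)+1) * (m - r')) = ηm * m * ((t1:ℝ) * (m - r)) := by rw [key]
        have hmm : m * (m - r) ≤ c * (c - r) :=
          mul_le_mul hmc (by linarith : m - r ≤ c - r) hmr hc
        have e2 : ηm * (t1:ℝ) * (m * (m - r)) ≤ ηm * (t1:ℝ) * (c * (c - r)) :=
          mul_le_mul_of_nonneg_left hmm (mul_nonneg hm (by linarith))
        nlinarith [e, e2]
    have tailbound : ηm * m * max (m - r') 0 * ((t1:ℝ)+1) * harmSum (t1+1) n
        ≤ ηm * c * max (c - r) 0 * (t1:ℝ) * harmSum (t1+1) n :=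
      mul_le_mul_of_nonneg_right subB hh'
    have hrhseq : ηm * c * max (c - r) 0 * (t1:ℝ) * harmSum t1 (n+1)
        = ηm * c * max (c - r) 0 + ηm * c * max (c - r) 0 * (t1:ℝ) * harmSum (t1+1) n := by
      show ηm * c * max (c - r) 0 * (t1:ℝ) * (1/(t1:ℝ) + harmSum (t1+1) n) = _
      field_simp
    refine ⟨m :: Q', ?_, ?_, ?_⟩
    · rw [hAB]
      exact (hperm'.cons m).trans List.perm_middle.symm
    · exact List.pairwise_cons.2 ⟨fun b hb => hmax b (hABsub b (hperm'.subset hb)), hsort'⟩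
    · rw [hAB, eq2, hrhseq]
      rw [eq1] at hmove
      linarith only [hmove, hineq', tailbound, subA]

lemma arm_bridge (H : ℝ → ℝ) (ηp ηm : ℝ) :
    ∀ (n t1 : ℕ), 1 ≤ t1 → ∀ (r : ℝ) (p : ℕ → ℝ),
    armV H ηp ηm t1 (t1+n) r p = VL H ηp ηm t1 r ((List.range' t1 (n+1)).map p) := by
  intro n
  induction n with
  | zero =>
    intro t1 ht1 r p
    have ht0 : ((t1:ℝ)) ≠ 0 := by
      have : (1:ℝ) ≤ (t1:ℝ) := by exact_mod_cast ht1
      linarith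
    have h1 : armRef t1 r p t1 = r := by
      simp [armRef, Finset.Ico_self, mul_div_assoc]
      field_simp
    simp [armV, VL, List.range'_succ, h1]
  | succ n ih =>
    intro t1 ht1 r p
    have ht0 : ((t1:ℝ)) ≠ 0 := by
      have : (1:ℝ) ≤ (t1:ℝ) := by exact_mod_cast ht1
      linarith
    have castt : ((t1 + 1 : ℕ) : ℝ) = (t1:ℝ) + 1 := by push_cast; ring
    set r' := ((t1:ℝ) * r + p t1)/((t1:ℝ)+1) with hr'_def
    have hsplit : Finset.Icc t1 (t1+(n+1)) = insert t1 (Finset.Icc (t1+1) (t1+(n+1))) := by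
      ext x
      simp only [Finset.mem_Icc, Finset.mem_insert]
      omega
    have hnotmem : t1 ∉ Finset.Icc (t1+1) (t1+(n+1)) := by
      simp only [Finset.mem_Icc]
      omega
    have href1 : armRef t1 r p t1 = r := by
      simp [armRef, Finset.Ico_self, mul_div_assoc]
      field_simp
    have href : ∀ t ∈ Finset.Icc (t1+1) (t1+(n+1)),
        armRef t1 r p t = armRef (t1+1) r' p t := by
      intro t ht
      simp only [Finset.mem_Icc] at ht
      have h1t : t1 < t := by omega
      have : ∑ s ∈ Finset.Ico t1 t, p s = p t1 + ∑ s ∈ Finset.Ico (t1+1) t, p s :=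
        Finset.sum_eq_sum_Ico_succ_bot h1t p
      simp only [armRef, this, castt]
      congr 1
      rw [hr'_def]
      field_simp
      ring
    have hsum : armV H ηp ηm t1 (t1+(n+1)) r p
        = armRev H ηp ηm (p t1) r + armV H ηp ηm (t1+1) ((t1+1)+n) r' p := by
      rw [armV, hsplit, Finset.sum_insert hnotmem, href1]
      congr 1
      · rw [armV]
        have : (t1+1)+n = t1+(n+1) := by omega
        rw [this]
        exact Finset.sum_congr rfl fun t ht => by rw [href t ht]
    rw [hsum, ih (t1+1) (by omega) r' p]
    have hlist : List.range' t1 (n+1+1) = t1 :: List.range' (t1+1) (n+1) := List.range'_succ ..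
    rw [hlist, List.map_cons]
    simp only [VL, hr'_def]

lemma armV_congr (H : ℝ → ℝ) (ηp ηm : ℝ) (t1 T : ℕ) (r : ℝ) (p p' : ℕ → ℝ)
    (h : ∀ t ∈ Finset.Icc t1 T, p t = p' t) :
    armV H ηp ηm t1 T r p = armV H ηp ηm t1 T r p' := by
  unfold armV
  refine Finset.sum_congr rfl fun t ht => ?_
  simp only [Finset.mem_Icc] at ht
  have h1 : p t = p' t := h t (Finset.mem_Icc.2 ht)
  have h2 : armRef t1 r p t = armRef t1 r p' t := by
    unfold armRef
    congr 1
    congr 1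
    refine Finset.sum_congr rfl fun s hs => ?_
    simp only [Finset.mem_Ico] at hs
    exact h s (Finset.mem_Icc.2 ⟨hs.1, by omega⟩)
  rw [h1, h2]

lemma arm_exists_opt (pbar : ℝ) (hpbar : 0 < pbar) (H : ℝ → ℝ)
    (hH : ContinuousOn H (Set.Icc (0 : ℝ) pbar))
    (ηp ηm : ℝ) (t1 T : ℕ) (r : ℝ) :
    ∃ pstar : ℕ → ℝ, (∀ t, pstar t ∈ Set.Icc (0:ℝ) pbar) ∧
      armVStar H ηp ηm t1 T pbar r = armV H ηp ηm t1 T r pstar := by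
  set K : Set (ℕ → ℝ) := Set.pi Set.univ (fun _ => Set.Icc (0:ℝ) pbar) with hK_def
  have hKc : IsCompact K := isCompact_univ_pi (fun _ => isCompact_Icc)
  have hKne : K.Nonempty := ⟨fun _ => 0, fun t _ => ⟨le_refl 0, hpbar.le⟩⟩
  set F : (ℕ → ℝ) → ℝ := fun p => armV H ηp ηm t1 T r p with hF_def
  have hFc : ContinuousOn F K := by
    rw [hF_def]
    unfold armV
    apply continuousOn_finset_sum
    intro t _
    have h1 : Continuous fun p : ℕ → ℝ => p t := continuous_apply t
    have h2 : Continuous fun p : ℕ → ℝ => armRef t1 r p t := by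
      unfold armRef
      exact (continuous_const.add (continuous_finset_sum _ fun s _ => continuous_apply s)).div_const _
    have h3 : ContinuousOn (fun p : ℕ → ℝ => H (p t)) K := by
      apply hH.comp h1.continuousOn
      intro p hp
      exact hp t (Set.mem_univ t)
    unfold armRev
    apply h1.continuousOn.mul
    apply ContinuousOn.sub
    apply ContinuousOn.add h3
    · exact (continuous_const.mul ((h2.sub h1).max continuous_const)).continuousOn
    · exact (continuous_const.mul ((h1.sub h2).max continuous_const)).continuousOn
  have himg : IsCompact (F '' K) := hKc.image_of_continuousOn hFc
  have himgne : (F '' K).Nonempty := hKne.image F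
  have hSeq : {x : ℝ | ∃ p : ℕ → ℝ,
      (∀ t ∈ Finset.Icc t1 T, p t ∈ Set.Icc 0 pbar) ∧ x = armV H ηp ηm t1 T r p} = F '' K := by
    ext x
    constructor
    · rintro ⟨p, hp, rfl⟩
      refine ⟨fun t => if t ∈ Finset.Icc t1 T then p t else 0, ?_, ?_⟩
      · intro t _
        by_cases h : t ∈ Finset.Icc t1 T
        · simpa [h] using hp t h
        · simp [h, le_refl, hpbar.le]
      · rw [hF_def]
        exact armV_congr H ηp ηm t1 T r _ p (fun t ht => by simp [ht])
    · rintro ⟨p, hp, rfl⟩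
      exact ⟨p, fun t _ => hp t (Set.mem_univ t), rfl⟩
  have hmem : sSup (F '' K) ∈ F '' K := himg.sSup_mem himgne
  obtain ⟨pstar, hpstar, heq⟩ := hmem
  exact ⟨pstar, fun t => hpstar t (Set.mem_univ t), by rw [armVStar, hSeq, ← heq]⟩

lemma harm_eq : ∀ (n t1 : ℕ), harmSum t1 n = ∑ t ∈ Finset.Ico t1 (t1+n), (1:ℝ)/(t:ℝ)
  | 0, t1 => by simp [harmSum]
  | n+1, t1 => by
    have h1 : t1 < t1 + (n+1) := by omega
    rw [Finset.sum_eq_sum_Ico_succ_bot h1]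
    have h2 : t1 + (n+1) = (t1+1) + n := by omega
    rw [h2]
    simp only [harmSum, harm_eq n (t1+1)]

/-- Near-optimality of markdown pricing: there is a non-increasing price sequence whose
revenue is within `p̄·t1·(p̄−r)·(η⁺+η⁻)·Σ_{t=t1}^{T} 1/t` of the optimal revenue. -/
theorem markdown_near_optimal
    (pbar : ℝ) (hpbar : 0 < pbar) (H : ℝ → ℝ)
    (hH : ContinuousOn H (Set.Icc (0 : ℝ) pbar))
    (ηp ηm : ℝ) (hηp : 0 ≤ ηp) (hηm : 0 ≤ ηm)
    (t1 T : ℕ) (ht1 : 1 ≤ t1) (hT : t1 ≤ T)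
    (r : ℝ) (hr : r ∈ Set.Icc 0 pbar) :
    ∃ q : ℕ → ℝ,
      (∀ t ∈ Finset.Icc t1 T, q t ∈ Set.Icc 0 pbar) ∧
      AntitoneOn q ↑(Finset.Icc t1 T) ∧
      armVStar H ηp ηm t1 T pbar r - armV H ηp ηm t1 T r q ≤
        pbar * (t1 : ℝ) * (pbar - r) * (ηp + ηm) * ∑ t ∈ Finset.Icc t1 T, (1 : ℝ) / (t : ℝ) := by
  obtain ⟨pstar, hpstar, hopt⟩ := arm_exists_opt pbar hpbar H hH ηp ηm t1 T r
  obtain ⟨hr0, hrp⟩ := hr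
  set N := T - t1 with hN_def
  have hTN : T = t1 + N := by omega
  set L : List ℝ := (List.range' t1 (N+1)).map pstar with hL_def
  have hLlen : L.length = N + 1 := by simp [hL_def]
  have hLbd : ∀ x ∈ L, 0 ≤ x ∧ x ≤ pbar := by
    intro x hx
    rw [hL_def, List.mem_map] at hx
    obtain ⟨t, _, rfl⟩ := hx
    exact ⟨(hpstar t).1, (hpstar t).2⟩
  obtain ⟨Q, hperm, hsort, hineq⟩ :=
    arm_sortMain H ηp ηm hηp hηm (N+1) L hLlen pbar t1 r ht1 hr0 hpbar.le hLbd
  have hQlen : Q.length = N + 1 := hperm.length_eq.trans hLlen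
  refine ⟨fun t => Q.getD (t - t1) 0, ?_, ?_, ?_⟩
  · intro t ht
    rw [Finset.mem_Icc] at ht
    have hi : t - t1 < Q.length := by omega
    show Q.getD (t - t1) 0 ∈ Set.Icc 0 pbar
    rw [List.getD_eq_getElem Q 0 hi]
    have := hLbd _ (hperm.subset (Q.getElem_mem hi))
    exact ⟨this.1, this.2⟩
  · intro a ha b hb hab
    rw [Finset.mem_coe, Finset.mem_Icc] at ha hb
    have hj : b - t1 < Q.length := by omega
    have hi : a - t1 < Q.length := by omega
    show Q.getD (b - t1) 0 ≤ Q.getD (a - t1) 0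
    rw [List.getD_eq_getElem Q 0 hj, List.getD_eq_getElem Q 0 hi]
    rcases Nat.lt_or_ge (a - t1) (b - t1) with hlt | hge
    · exact List.pairwise_iff_getElem.1 hsort _ _ hi hj hlt
    · have : a - t1 = b - t1 := by omega
      simp only [this]
      exact le_refl _
  · have hbridgeq : armV H ηp ηm t1 T r (fun t => Q.getD (t - t1) 0) = VL H ηp ηm t1 r Q := by
      rw [hTN, arm_bridge H ηp ηm N t1 ht1 r]
      congr 1
      apply List.ext_getElem
      · simp [hQlen]
      · intro i h1 h2
        simp only [List.getElem_map, List.getElem_range'_1]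
        have : t1 + i - t1 = i := by omega
        rw [this, List.getD_eq_getElem Q 0]
    have hbridgep : armV H ηp ηm t1 T r pstar = VL H ηp ηm t1 r L := by
      rw [hTN, arm_bridge H ηp ηm N t1 ht1 r, hL_def]
    have hharm : harmSum t1 (N+1) = ∑ t ∈ Finset.Icc t1 T, (1:ℝ)/(t:ℝ) := by
      rw [harm_eq]
      have : t1 + (N+1) = T + 1 := by omega
      rw [this, Finset.Ico_add_one_right_eq_Icc]
    have hmax : max (pbar - r) 0 = pbar - r := max_eq_left (by linarith)
    rw [hopt, hbridgeq, hbridgep]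
    rw [hharm, hmax] at hineq
    have hS : 0 ≤ ∑ t ∈ Finset.Icc t1 T, (1:ℝ)/(t:ℝ) :=
      Finset.sum_nonneg fun t _ => by positivity
    have hkey : 0 ≤ ηp * (pbar * ((pbar - r) * ((t1:ℝ) * ∑ t ∈ Finset.Icc t1 T, (1:ℝ)/(t:ℝ)))) := by
      have ht1' : (0:ℝ) ≤ (t1:ℝ) := Nat.cast_nonneg t1
      have : 0 ≤ pbar - r := by linarith
      positivity
    nlinarith [hineq, hkey]
end

section
/- Consider linear demand H(p) = b − a·p with a > 0 and symmetric reference effects η⁺ = η⁻ = η ≥ 0 (so the single-round revenue is p·(b − a·p + η·(r−p))). Fix 1 ≤ t1 ≤ T and a starting reference price r ∈ [0,p̄]. Suppose p* = (p*_t)_{t=t1}^{T} maximizes the total revenue V^p(r,t1) over [0,p̄]^{T−t1+1}, and suppose there exists t† ∈ {t1,…,T} such that p*_t = p̄ for t1 ≤ t < t† and 0 < p*_t < p̄ for t† ≤ t ≤ T. Then, with (r*_t) the induced ARM reference prices: (i) the terminal price satisfies p*_T = (b + η·r*_T)/(2(a+η)); and (ii) the markdown recursion p*_t = p*_{t+1}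 + η·r*_t/(2(a+η)(t+1) + η) holds for every t with t† ≤ t ≤ T−1. -/
lemma armRev_sym (b a η y ρ : ℝ) :
    armRev (fun x => b - a * x) η η y ρ = y * (b - a * y) + η * y * (ρ - y) := by
  unfold armRev
  rcases le_total y ρ with h | h
  · rw [max_eq_left (by linarith), max_eq_right (by linarith)]
    ring
  · rw [max_eq_right (by linarith), max_eq_left (by linarith)]
    ring

/-- Structure of the optimal policy for linear demand `H(p) = b − a·p` with symmetric
reference effects `η⁺ = η⁻ = η`: if the optimal price sequence equals `p̄` before `t†`
and is interior from `t†` onwards, then the terminal price satisfies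
`p_T = (b + η·r_T)/(2(a+η))` and the markdown recursion
`p_t = p_{t+1} + η·r_t/(2(a+η)(t+1) + η)` holds for `t† ≤ t ≤ T−1`. -/
theorem optimal_markdown_structure_linear
    (pbar a b η : ℝ) (hpbar : 0 < pbar) (ha : 0 < a) (hη : 0 ≤ η)
    (t1 T : ℕ) (ht1 : 1 ≤ t1) (hT : t1 ≤ T)
    (r : ℝ) (hr : r ∈ Set.Icc 0 pbar)
    (p : ℕ → ℝ) (hp : ∀ t ∈ Finset.Icc t1 T, p t ∈ Set.Icc 0 pbar)
    (hopt : ∀ q : ℕ → ℝ, (∀ t ∈ Finset.Icc t1 T, q t ∈ Set.Icc 0 pbar) →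
      armV (fun x => b - a * x) η η t1 T r q ≤ armV (fun x => b - a * x) η η t1 T r p)
    (tdag : ℕ) (htdag : tdag ∈ Finset.Icc t1 T)
    (hhigh : ∀ t, t1 ≤ t → t < tdag → p t = pbar)
    (hint : ∀ t, tdag ≤ t → t ≤ T → 0 < p t ∧ p t < pbar) :
    p T = (b + η * armRef t1 r p T) / (2 * (a + η)) ∧
    (∀ t, tdag ≤ t → t + 1 ≤ T →
      p t = p (t + 1) + η * armRef t1 r p t / (2 * (a + η) * ((t : ℝ) + 1) + η)) := by
  obtain ⟨htd1, htdT⟩ := Finset.mem_Icc.mp htdag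
  have hc : (0:ℝ) < a + η := by linarith
  -- First order condition at every interior time
  have hFOC : ∀ t, tdag ≤ t → t ≤ T →
      2 * (a + η) * p t = b + η * armRef t1 r p t
        + η * ∑ s ∈ Finset.Ioc t T, p s / (s:ℝ) := by
    intro t htd htT
    have ht1t : t1 ≤ t := le_trans htd1 htd
    -- split a sum over Icc t1 T at t
    have hsplit : ∀ u : ℕ → ℝ, ∑ s ∈ Finset.Icc t1 T, u s
        = ∑ s ∈ Finset.Ico t1 t, u s + (u t + ∑ s ∈ Finset.Ioc t T, u s) := by
      intro u
      rw [← Finset.Ico_add_one_right_eq_Icc t1 T,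
        ← Finset.sum_Ico_consecutive u ht1t (k := T + 1) (Nat.le_succ_of_le htT),
        Finset.Ico_add_one_right_eq_Icc t T, Finset.Icc_eq_cons_Ioc htT, Finset.sum_cons]
    -- value of the perturbed sequence
    have hVq : ∀ x : ℝ,
        armV (fun x => b - a * x) η η t1 T r (Function.update p t x)
          = armV (fun x => b - a * x) η η t1 T r p
            + (x - p t) * (b + η * armRef t1 r p t
                + η * ∑ s ∈ Finset.Ioc t T, p s / (s:ℝ) - 2 * (a + η) * p t)
            - (a + η) * (x - p t) ^ 2 := by
      intro x
      have hlow : ∀ s : ℕ, s ≤ t →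
          armRef t1 r (Function.update p t x) s = armRef t1 r p s := by
        intro s hs
        unfold armRef
        congr 1
        congr 1
        refine Finset.sum_congr rfl fun i hi => ?_
        have : i < s := (Finset.mem_Ico.mp hi).2
        exact Function.update_of_ne (by omega) _ _
      have hhi : ∀ s ∈ Finset.Ioc t T,
          armRef t1 r (Function.update p t x) s = armRef t1 r p s + (x - p t) / (s:ℝ) := by
        intro s hs
        obtain ⟨hts, hsT⟩ := Finset.mem_Ioc.mp hs
        have htmem : t ∈ Finset.Ico t1 s := Finset.mem_Ico.mpr ⟨ht1t, hts⟩
        unfold armRef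
        rw [Finset.sum_update_of_mem htmem, ← Finset.erase_eq,
          Finset.sum_erase_eq_sub htmem, ← add_div]
        ring_nf
      unfold armV
      rw [hsplit, hsplit]
      have h1 : ∑ s ∈ Finset.Ico t1 t,
            armRev (fun x => b - a * x) η η (Function.update p t x s)
              (armRef t1 r (Function.update p t x) s)
          = ∑ s ∈ Finset.Ico t1 t,
            armRev (fun x => b - a * x) η η (p s) (armRef t1 r p s) := by
        refine Finset.sum_congr rfl fun s hs => ?_
        have hst : s < t := (Finset.mem_Ico.mp hs).2
        rw [Function.update_of_ne (by omega), hlow s (le_of_lt hst)]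
      have h3 : ∑ s ∈ Finset.Ioc t T,
            armRev (fun x => b - a * x) η η (Function.update p t x s)
              (armRef t1 r (Function.update p t x) s)
          = ∑ s ∈ Finset.Ioc t T,
            (armRev (fun x => b - a * x) η η (p s) (armRef t1 r p s)
              + η * p s * ((x - p t) / (s:ℝ))) := by
        refine Finset.sum_congr rfl fun s hs => ?_
        have hts : t < s := (Finset.mem_Ioc.mp hs).1
        rw [Function.update_of_ne (by omega), hhi s hs, armRev_sym, armRev_sym]
        ring
      have hS : ∑ s ∈ Finset.Ioc t T, η * p s * ((x - p t) / (s:ℝ))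
          = η * (x - p t) * ∑ s ∈ Finset.Ioc t T, p s / (s:ℝ) := by
        rw [Finset.mul_sum]
        exact Finset.sum_congr rfl fun s _ => by ring
      rw [h1, h3, Finset.sum_add_distrib, hS, Function.update_self, hlow t le_rfl,
        armRev_sym, armRev_sym]
      ring
    -- interior optimum forces the derivative to vanish
    obtain ⟨hpos, hlt⟩ := hint t htd htT
    set D : ℝ := b + η * armRef t1 r p t
        + η * ∑ s ∈ Finset.Ioc t T, p s / (s:ℝ) - 2 * (a + η) * p t with hD
    have hD0 : D = 0 := by
      by_contra hDne
      have habs : 0 < |D| := abs_pos.mpr hDne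
      set δ : ℝ := min (min (p t) (pbar - p t)) (|D| / (2 * (a + η))) with hδdef
      have hδ : 0 < δ := by
        apply lt_min (lt_min hpos (by linarith))
        positivity
      have hδ1 : δ ≤ p t := le_trans (min_le_left _ _) (min_le_left _ _)
      have hδ2 : δ ≤ pbar - p t := le_trans (min_le_left _ _) (min_le_right _ _)
      have hδ3 : δ ≤ |D| / (2 * (a + η)) := min_le_right _ _
      set ε : ℝ := if 0 ≤ D then δ else -δ with hεdef
      have hε1 : ε * D = δ * |D| := by
        rcases le_or_gt 0 D with h | h
        · rw [hεdef, if_pos h, abs_of_nonneg h]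
        · rw [hεdef, if_neg (not_le.mpr h), abs_of_neg h]; ring
      have hε2 : ε ^ 2 = δ ^ 2 := by
        rcases le_or_gt 0 D with h | h
        · rw [hεdef, if_pos h]
        · rw [hεdef, if_neg (not_le.mpr h)]; ring
      have hεmem : p t + ε ∈ Set.Icc 0 pbar := by
        rcases le_or_gt 0 D with h | h
        · rw [hεdef, if_pos h]; constructor <;> [linarith; linarith]
        · rw [hεdef, if_neg (not_le.mpr h)]; constructor <;> [linarith; linarith]
      have hqmem : ∀ s ∈ Finset.Icc t1 T,
          Function.update p t (p t + ε) s ∈ Set.Icc 0 pbar := by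
        intro s hs
        by_cases hst : s = t
        · subst hst; rw [Function.update_self]; exact hεmem
        · rw [Function.update_of_ne hst]; exact hp s hs
      have hle := hopt _ hqmem
      rw [hVq (p t + ε)] at hle
      have hkey : ε * D ≤ (a + η) * ε ^ 2 := by
        have : (p t + ε - p t) = ε := by ring
        rw [this] at hle
        linarith
      rw [hε1, hε2] at hkey
      have h4 : (a + η) * δ ^ 2 ≤ δ * |D| / 2 := by
        have : (a + η) * δ ≤ |D| / 2 := by
          calc (a + η) * δ ≤ (a + η) * (|D| / (2 * (a + η))) := by
                exact mul_le_mul_of_nonneg_left hδ3 (le_of_lt hc)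
            _ = |D| / 2 := by field_simp
        nlinarith
      nlinarith
    rw [hD] at hD0
    linarith
  constructor
  · -- terminal condition
    have h := hFOC T htdT le_rfl
    rw [Finset.Ioc_self, Finset.sum_empty] at h
    have h2 : (2 * (a + η)) ≠ 0 := by positivity
    field_simp
    linarith
  · -- markdown recursion
    intro t htd htT1
    have htT : t ≤ T := by omega
    have ht1t : t1 ≤ t := le_trans htd1 htd
    have htne : (t:ℝ) ≠ 0 := by
      have : 1 ≤ t := le_trans ht1 ht1t
      exact_mod_cast Nat.pos_of_ne_zero (by omega) |>.ne'
    have ht1ne : ((t:ℝ) + 1) ≠ 0 := by positivity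
    have e1 := hFOC t htd htT
    have e2 := hFOC (t + 1) (by omega) htT1
    -- split the sum in e1
    have hsum : ∑ s ∈ Finset.Ioc t T, p s / (s:ℝ)
        = p (t+1) / ((t:ℝ)+1) + ∑ s ∈ Finset.Ioc (t+1) T, p s / (s:ℝ) := by
      rw [← Finset.Icc_add_one_left_eq_Ioc t T, Finset.Icc_eq_cons_Ioc htT1, Finset.sum_cons,
        Nat.cast_add, Nat.cast_one]
    rw [hsum] at e1
    -- reference price recursion
    have e3 : ((t:ℝ)+1) * armRef t1 r p (t+1) = (t:ℝ) * armRef t1 r p t + p t := by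
      unfold armRef
      rw [Finset.sum_Ico_succ_top ht1t]
      push_cast
      field_simp
      ring
    have hq : ((t:ℝ)+1) * (p (t+1) / ((t:ℝ)+1)) = p (t+1) := mul_div_cancel₀ _ ht1ne
    have hden : 2 * (a + η) * ((t:ℝ) + 1) + η ≠ 0 := by positivity
    field_simp
    linear_combination (((t:ℝ)+1)) * e1 - (((t:ℝ)+1)) * e2 - η * e3 + η * hq
end

section
/- Consider linear demand H(p) = b − a·p with a > 0, b > 0, symmetric reference effects η⁺ = η⁻ = η ≥ 0, horizon T ≥ 1, starting reference price r1 ∈ [0,p̄], and let H_T = Σ_{t=1}^{T} (1/t). The total ARM revenue of the constant price sequence p_t ≡ p equals f(p) := T·p·(b − a·p) + η·p·(r1 − p)·H_T = (T·b + η·r1·H_T)·p − (T·a + η·H_T)·p². Moreover, if p̂ := (T·b + η·r1·H_T)/(2·(T·a + η·H_T)) lies in [0, p̄], then the maximum of f over [0,p̄] is attained at p̂ and equals (T·b + η·r1·H_T)² / (4·(T·a + η·H_T)); in particular, when r1 = 0 the revenue of every fixed price is at most T·b²/(4a). -/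
/-- The harmonic sum `H_T = Σ_{t=1}^{T} 1/t`. -/
noncomputable def harm (T : ℕ) : ℝ := ∑ t ∈ Finset.Icc 1 T, (1 : ℝ) / (t : ℝ)

lemma armV_const (a b η r1 p : ℝ) (T : ℕ) :
    armV (fun x => b - a * x) η η 1 T r1 (fun _ => p)
      = (T : ℝ) * (p * (b - a * p)) + η * p * (r1 - p) * harm T := by
  unfold armV harm
  have key : ∀ t ∈ Finset.Icc 1 T,
      armRev (fun x => b - a * x) η η p (armRef 1 r1 (fun _ => p) t)
        = p * (b - a * p) + (η * p * (r1 - p)) * (1 / (t : ℝ)) := by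
    intro t ht
    have ht1 : 1 ≤ t := (Finset.mem_Icc.mp ht).1
    have htpos : (0 : ℝ) < (t : ℝ) := by exact_mod_cast ht1
    have href : armRef 1 r1 (fun _ => p) t = (r1 + ((t : ℝ) - 1) * p) / t := by
      unfold armRef
      rw [Finset.sum_const, Nat.card_Ico, nsmul_eq_mul]
      rw [show ((t - 1 : ℕ) : ℝ) = (t : ℝ) - 1 by
        push_cast [Nat.cast_sub ht1]; ring]
      push_cast; ring
    have hrp : armRef 1 r1 (fun _ => p) t - p = (r1 - p) / t := by
      rw [href]; field_simp; ring
    unfold armRev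
    simp only
    rw [show p - armRef 1 r1 (fun _ => p) t = -(armRef 1 r1 (fun _ => p) t - p) by ring,
      hrp]
    rcases le_total ((r1 - p) / (t : ℝ)) 0 with h | h
    · rw [max_eq_right h, max_eq_left (by linarith)]
      field_simp; ring
    · rw [max_eq_left h, max_eq_right (by linarith)]
      field_simp; ring
  rw [Finset.sum_congr rfl key, Finset.sum_add_distrib, Finset.sum_const, Nat.card_Icc,
    ← Finset.mul_sum]
  push_cast; ring

lemma harm_nonneg (T : ℕ) : 0 ≤ harm T :=
  Finset.sum_nonneg fun t _ => by positivity

/-- Fixed-price revenue for linear demand with symmetric reference effects: the total ARM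
revenue of the constant price `p` is the quadratic
`f(p) = T·p·(b−a·p) + η·p·(r1−p)·H_T = (T·b + η·r1·H_T)·p − (T·a + η·H_T)·p²`; if
`p̂ = (T·b + η·r1·H_T)/(2(T·a + η·H_T)) ∈ [0,p̄]`, this is maximized over `[0,p̄]` at `p̂`
with value `(T·b + η·r1·H_T)²/(4(T·a + η·H_T))`; and when `r1 = 0` every fixed price earns
at most `T·b²/(4a)`. -/
theorem fixed_price_revenue_linear
    (pbar a b η : ℝ) (hpbar : 0 < pbar) (ha : 0 < a) (hb : 0 < b) (hη : 0 ≤ η)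
    (T : ℕ) (hT : 1 ≤ T) (r1 : ℝ) (hr1 : r1 ∈ Set.Icc 0 pbar) :
    (∀ p ∈ Set.Icc (0 : ℝ) pbar,
      armV (fun x => b - a * x) η η 1 T r1 (fun _ => p)
          = (T : ℝ) * (p * (b - a * p)) + η * p * (r1 - p) * harm T ∧
      armV (fun x => b - a * x) η η 1 T r1 (fun _ => p)
          = ((T : ℝ) * b + η * r1 * harm T) * p - ((T : ℝ) * a + η * harm T) * p ^ 2) ∧
    (((T : ℝ) * b + η * r1 * harm T) / (2 * ((T : ℝ) * a + η * harm T)) ∈ Set.Icc (0 : ℝ) pbar →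
      (∀ p ∈ Set.Icc (0 : ℝ) pbar,
        armV (fun x => b - a * x) η η 1 T r1 (fun _ => p) ≤
          armV (fun x => b - a * x) η η 1 T r1
            (fun _ => ((T : ℝ) * b + η * r1 * harm T) / (2 * ((T : ℝ) * a + η * harm T)))) ∧
      armV (fun x => b - a * x) η η 1 T r1
          (fun _ => ((T : ℝ) * b + η * r1 * harm T) / (2 * ((T : ℝ) * a + η * harm T)))
        = ((T : ℝ) * b + η * r1 * harm T) ^ 2 / (4 * ((T : ℝ) * a + η * harm T))) ∧
    (r1 = 0 → ∀ p ∈ Set.Icc (0 : ℝ) pbar,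
      armV (fun x => b - a * x) η η 1 T r1 (fun _ => p) ≤ (T : ℝ) * b ^ 2 / (4 * a)) := by
  have hT1 : (1 : ℝ) ≤ (T : ℝ) := by exact_mod_cast hT
  have hH : 0 ≤ harm T := harm_nonneg T
  set A : ℝ := (T : ℝ) * b + η * r1 * harm T with hA
  set B : ℝ := (T : ℝ) * a + η * harm T with hB
  have hBpos : 0 < B := by
    have : 0 ≤ η * harm T := mul_nonneg hη hH
    nlinarith
  have hf : ∀ p : ℝ, armV (fun x => b - a * x) η η 1 T r1 (fun _ => p) = A * p - B * p ^ 2 := by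
    intro p
    rw [armV_const, hA, hB]; ring
  refine ⟨fun p _ => ⟨armV_const a b η r1 p T, hf p⟩, fun _ => ⟨?_, ?_⟩, ?_⟩
  · intro p _
    rw [hf, hf]
    have h1 : 0 ≤ (2 * B * p - A) ^ 2 := sq_nonneg _
    have hB' : B ≠ 0 := ne_of_gt hBpos
    have : A * (A / (2 * B)) - B * (A / (2 * B)) ^ 2 = A ^ 2 / (4 * B) := by
      field_simp; ring
    rw [this, le_div_iff₀ (by linarith : (0:ℝ) < 4 * B)]
    nlinarith
  · rw [hf]
    field_simp
    ring
  · intro hr0 p hp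
    rw [hf]
    have hp0 : 0 ≤ p := hp.1
    have hA0 : A = (T : ℝ) * b := by rw [hA, hr0]; ring
    rw [hA0]
    have hηH : 0 ≤ η * harm T := mul_nonneg hη hH
    have hBa : (T : ℝ) * a ≤ B := by rw [hB]; linarith
    rw [le_div_iff₀ (by linarith : (0:ℝ) < 4 * a)]
    nlinarith [mul_nonneg (by linarith : (0:ℝ) ≤ (T:ℝ)) (sq_nonneg (b - 2 * a * p)),
      mul_le_mul_of_nonneg_right hBa (sq_nonneg p), ha.le, hp0]
end

section
/- Fix integers 1 ≤ t1 < T and a real c ≥ 0, and set H = Σ_{s=t1+1}^{T} (1/s). Let M be the real symmetric matrix indexed by t, u ∈ {t1, …, T} with diagonal entries M_{tt} = 1 and off-diagonal entries M_{tu} = −c/max(t,u) for t ≠ u. Then every eigenvalue λ of M satisfies 1 − c·H ≤ λ ≤ 1 + c·H; in particular, if c·H < 1 then M is positive definite. Consequently, for linear demand H(p) = b − a·p with symmetric reference effects η⁺ = η⁻ = η ≥ 0 and a + η > 0, the total ARM revenue V^p(r, t1) = Σ_{t=t1}^{T} p_t·(b − a·p_t + η·(r_t − p_t)) is a quadratic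 function of the price vector p whose (constant) Hessian equals −2(a+η)·M with c = η/(2(a+η)), so every eigenvalue of this Hessian lies in [−2(a+η)(1 + cH), −2(a+η)(1 − cH)]. -/
open Matrix

/-- ARM reference price at time `t` for a price vector indexed by the window `{t1,…,T}`. -/
noncomputable def refSub (t1 T : ℕ) (r : ℝ) (p : ↥(Finset.Icc t1 T) → ℝ)
    (t : ↥(Finset.Icc t1 T)) : ℝ :=
  ((t1 : ℝ) * r + ∑ s : ↥(Finset.Icc t1 T), if (s : ℕ) < (t : ℕ) then p s else 0) /
    ((t : ℕ) : ℝ)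

/-- Total ARM revenue for linear demand `b − a·p` with symmetric reference effects `η`,
viewed as a function of the price vector `p` over the window `{t1,…,T}`. -/
noncomputable def armVQuad (t1 T : ℕ) (a b η r : ℝ) (p : ↥(Finset.Icc t1 T) → ℝ) : ℝ :=
  ∑ t : ↥(Finset.Icc t1 T), p t * (b - a * p t + η * (refSub t1 T r p t - p t))

lemma sum_ite_eq_sum_erase (f : ℕ → ℝ) (s : Finset ℕ) {t : ℕ} (ht : t ∈ s) :
    (∑ u ∈ s, if t = u then 0 else f u) = ∑ u ∈ s.erase t, f u := by
  rw [← Finset.sum_erase_add s _ ht, if_pos rfl, add_zero]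
  exact Finset.sum_congr rfl fun u hu => if_neg fun h => Finset.ne_of_mem_erase hu h.symm

lemma rowBound (t1 T t : ℕ) (ht1 : 1 ≤ t1) (hl : t1 ≤ t) (hr : t ≤ T) :
    ∑ u ∈ (Finset.Icc t1 T).erase t, (1 : ℝ) / ((max t u : ℕ) : ℝ)
      ≤ ∑ s ∈ Finset.Icc (t1 + 1) T, (1 : ℝ) / (s : ℝ) := by
  set g : ℕ → ℕ := fun u => if u < t then u + 1 else u with hg
  have hstep : ∀ u ∈ (Finset.Icc t1 T).erase t,
      (1 : ℝ) / ((max t u : ℕ) : ℝ) ≤ (1 : ℝ) / ((g u : ℕ) : ℝ) := by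
    intro u hu
    obtain ⟨hne, hmem⟩ := Finset.mem_erase.mp hu
    obtain ⟨h1, h2⟩ := Finset.mem_Icc.mp hmem
    have hgu : 0 < g u ∧ g u ≤ max t u := by
      simp only [hg]
      split_ifs with h <;> constructor <;> omega
    apply one_div_le_one_div_of_le
    · exact_mod_cast hgu.1
    · exact_mod_cast hgu.2
  have hinj : ∀ x ∈ (Finset.Icc t1 T).erase t, ∀ y ∈ (Finset.Icc t1 T).erase t,
      g x = g y → x = y := by
    intro x hx y hy h
    obtain ⟨hxne, hxm⟩ := Finset.mem_erase.mp hx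
    obtain ⟨hyne, hym⟩ := Finset.mem_erase.mp hy
    simp only [hg] at h
    split_ifs at h <;> omega
  have hsub : Finset.image g ((Finset.Icc t1 T).erase t) ⊆ Finset.Icc (t1 + 1) T := by
    intro s hs
    obtain ⟨u, hu, hgu⟩ := Finset.mem_image.mp hs
    obtain ⟨hne, hmem⟩ := Finset.mem_erase.mp hu
    obtain ⟨h1, h2⟩ := Finset.mem_Icc.mp hmem
    rw [Finset.mem_Icc]
    simp only [hg] at hgu
    split_ifs at hgu <;> omega
  calc ∑ u ∈ (Finset.Icc t1 T).erase t, (1 : ℝ) / ((max t u : ℕ) : ℝ)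
      ≤ ∑ u ∈ (Finset.Icc t1 T).erase t, (1 : ℝ) / ((g u : ℕ) : ℝ) :=
        Finset.sum_le_sum hstep
    _ = ∑ s ∈ Finset.image g ((Finset.Icc t1 T).erase t), (1 : ℝ) / (s : ℝ) := by
        have himg : ∑ s ∈ Finset.image g ((Finset.Icc t1 T).erase t), (1 : ℝ) / (s : ℝ)
            = ∑ u ∈ (Finset.Icc t1 T).erase t, (1 : ℝ) / ((g u : ℕ) : ℝ) :=
          Finset.sum_image hinj
        rw [himg]
    _ ≤ ∑ s ∈ Finset.Icc (t1 + 1) T, (1 : ℝ) / (s : ℝ) := by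
        apply Finset.sum_le_sum_of_subset_of_nonneg hsub
        intro i hi _
        positivity

/-- Eigenvalue bounds for the matrix `M` with unit diagonal and off-diagonal entries
`−c/max(t,u)`: every eigenvalue lies in `[1 − c·H, 1 + c·H]` with
`H = Σ_{s=t1+1}^{T} 1/s`; if `c·H < 1` then `M` is positive definite. Consequently, with
`c = η/(2(a+η))`, the total ARM revenue for linear demand with symmetric effects is a
quadratic whose constant Hessian is `−2(a+η)·M`, and every eigenvalue of this Hessian lies
in `[−2(a+η)(1+cH), −2(a+η)(1−cH)]`. -/
theorem arm_hessian_eigenvalue_bounds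
    (t1 T : ℕ) (ht1 : 1 ≤ t1) (htT : t1 < T)
    (c : ℝ) (hc : 0 ≤ c)
    (M : Matrix ↥(Finset.Icc t1 T) ↥(Finset.Icc t1 T) ℝ)
    (hM : ∀ t u : ↥(Finset.Icc t1 T),
      M t u = if (t : ℕ) = (u : ℕ) then 1 else -c / ((max (t : ℕ) (u : ℕ) : ℕ) : ℝ)) :
    (∀ (lam : ℝ) (v : ↥(Finset.Icc t1 T) → ℝ), v ≠ 0 → M.mulVec v = lam • v →
      1 - c * (∑ s ∈ Finset.Icc (t1 + 1) T, (1 : ℝ) / (s : ℝ)) ≤ lam ∧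
      lam ≤ 1 + c * (∑ s ∈ Finset.Icc (t1 + 1) T, (1 : ℝ) / (s : ℝ))) ∧
    (c * (∑ s ∈ Finset.Icc (t1 + 1) T, (1 : ℝ) / (s : ℝ)) < 1 → M.PosDef) ∧
    (∀ a b η r : ℝ, 0 < a + η → 0 ≤ η → c = η / (2 * (a + η)) →
      (∀ p q : ↥(Finset.Icc t1 T) → ℝ,
        armVQuad t1 T a b η r (p + q) + armVQuad t1 T a b η r (p - q) - 2 * armVQuad t1 T a b η r p
          = (-(2 * (a + η))) * dotProduct q (M.mulVec q)) ∧
      (∀ (lam : ℝ) (v : ↥(Finset.Icc t1 T) → ℝ), v ≠ 0 →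
        ((-(2 * (a + η))) • M).mulVec v = lam • v →
        (-(2 * (a + η))) * (1 + c * (∑ s ∈ Finset.Icc (t1 + 1) T, (1 : ℝ) / (s : ℝ))) ≤ lam ∧
        lam ≤ (-(2 * (a + η))) * (1 - c * (∑ s ∈ Finset.Icc (t1 + 1) T, (1 : ℝ) / (s : ℝ))))) := by
  set H : ℝ := ∑ s ∈ Finset.Icc (t1 + 1) T, (1 : ℝ) / (s : ℝ) with hHdef
  -- positivity of indices
  have htpos : ∀ t : ↥(Finset.Icc t1 T), 0 < ((t : ℕ) : ℝ) := by
    intro t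
    have h := (Finset.mem_Icc.mp t.2).1
    have : 0 < (t : ℕ) := by omega
    exact_mod_cast this
  -- row-sum bound
  have hrow : ∀ t : ↥(Finset.Icc t1 T),
      (∑ u : ↥(Finset.Icc t1 T), if (t : ℕ) = (u : ℕ) then 0
        else (1 : ℝ) / ((max (t : ℕ) (u : ℕ) : ℕ) : ℝ)) ≤ H := by
    intro t
    obtain ⟨h1, h2⟩ := Finset.mem_Icc.mp t.2
    calc (∑ u : ↥(Finset.Icc t1 T), if (t : ℕ) = (u : ℕ) then 0
          else (1 : ℝ) / ((max (t : ℕ) (u : ℕ) : ℕ) : ℝ))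
        = ∑ u ∈ Finset.Icc t1 T, (if (t : ℕ) = u then 0
            else (1 : ℝ) / ((max (t : ℕ) u : ℕ) : ℝ)) :=
          Finset.sum_coe_sort (Finset.Icc t1 T)
            (fun u => if (t : ℕ) = u then 0 else (1 : ℝ) / ((max (t : ℕ) u : ℕ) : ℝ))
      _ = ∑ u ∈ (Finset.Icc t1 T).erase (t : ℕ),
            (1 : ℝ) / ((max (t : ℕ) u : ℕ) : ℝ) := sum_ite_eq_sum_erase _ _ t.2
      _ ≤ H := rowBound t1 T (t : ℕ) ht1 h1 h2
  -- expansion of the quadratic form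
  have hexp : ∀ w : ↥(Finset.Icc t1 T) → ℝ,
      dotProduct w (M.mulVec w)
        = (∑ t : ↥(Finset.Icc t1 T), w t ^ 2)
          + ∑ t : ↥(Finset.Icc t1 T), ∑ u : ↥(Finset.Icc t1 T),
              (if (t : ℕ) = (u : ℕ) then 0
                else -c / ((max (t : ℕ) (u : ℕ) : ℕ) : ℝ) * (w t * w u)) := by
    intro w
    simp only [dotProduct, Matrix.mulVec, hM, Finset.mul_sum]
    rw [← Finset.sum_add_distrib]
    refine Finset.sum_congr rfl fun t _ => ?_
    have hterm : ∀ u : ↥(Finset.Icc t1 T),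
        w t * ((if (t : ℕ) = (u : ℕ) then (1 : ℝ)
            else -c / ((max (t : ℕ) (u : ℕ) : ℕ) : ℝ)) * w u)
          = (if t = u then w t * w u else 0)
            + (if (t : ℕ) = (u : ℕ) then 0
                else -c / ((max (t : ℕ) (u : ℕ) : ℕ) : ℝ) * (w t * w u)) := by
      intro u
      by_cases h : t = u
      · subst h; simp
      · have h' : (t : ℕ) ≠ (u : ℕ) := fun hh => h (Subtype.ext hh)
        simp only [if_neg h', if_neg h, zero_add]
        ring
    simp_rw [hterm]
    rw [Finset.sum_add_distrib, Finset.sum_ite_eq, if_pos (Finset.mem_univ t)]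
    congr 1
    ring
  -- quadratic form bound
  have hQF : ∀ v : ↥(Finset.Icc t1 T) → ℝ,
      |dotProduct v (M.mulVec v) - ∑ t : ↥(Finset.Icc t1 T), v t ^ 2|
        ≤ c * H * ∑ t : ↥(Finset.Icc t1 T), v t ^ 2 := by
    intro v
    rw [hexp v, add_sub_cancel_left]
    have habs : ∀ t u : ↥(Finset.Icc t1 T),
        |if (t : ℕ) = (u : ℕ) then (0 : ℝ)
            else -c / ((max (t : ℕ) (u : ℕ) : ℕ) : ℝ) * (v t * v u)|
          ≤ (if (t : ℕ) = (u : ℕ) then 0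
              else c / ((max (t : ℕ) (u : ℕ) : ℕ) : ℝ) * ((v t ^ 2 + v u ^ 2) / 2)) := by
      intro t u
      split_ifs with h
      · simp
      · have hmax : 0 < ((max (t : ℕ) (u : ℕ) : ℕ) : ℝ) := by
          have := htpos t
          have h2 : (0 : ℝ) < ((t : ℕ) : ℝ) := this
          have h3 : (t : ℕ) ≤ max (t : ℕ) (u : ℕ) := le_max_left _ _
          have h4 : (0 : ℝ) < ((max (t : ℕ) (u : ℕ) : ℕ) : ℝ) := by
            exact_mod_cast lt_of_lt_of_le (by exact_mod_cast h2) h3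
          exact h4
        have hcd : 0 ≤ c / ((max (t : ℕ) (u : ℕ) : ℕ) : ℝ) := div_nonneg hc hmax.le
        rw [abs_mul, abs_div, abs_neg, abs_of_nonneg hc, abs_of_pos hmax]
        apply mul_le_mul_of_nonneg_left _ hcd
        rw [abs_mul]
        nlinarith [sq_nonneg (|v t| - |v u|), sq_abs (v t), sq_abs (v u),
          abs_nonneg (v t), abs_nonneg (v u)]
    calc |∑ t : ↥(Finset.Icc t1 T), ∑ u : ↥(Finset.Icc t1 T),
            (if (t : ℕ) = (u : ℕ) then (0:ℝ)
              else -c / ((max (t : ℕ) (u : ℕ) : ℕ) : ℝ) * (v t * v u))|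
        ≤ ∑ t : ↥(Finset.Icc t1 T), ∑ u : ↥(Finset.Icc t1 T),
            |if (t : ℕ) = (u : ℕ) then (0:ℝ)
              else -c / ((max (t : ℕ) (u : ℕ) : ℕ) : ℝ) * (v t * v u)| := by
          refine (Finset.abs_sum_le_sum_abs _ _).trans (Finset.sum_le_sum fun t _ => ?_)
          exact Finset.abs_sum_le_sum_abs _ _
      _ ≤ ∑ t : ↥(Finset.Icc t1 T), ∑ u : ↥(Finset.Icc t1 T),
            (if (t : ℕ) = (u : ℕ) then 0
              else c / ((max (t : ℕ) (u : ℕ) : ℕ) : ℝ) * ((v t ^ 2 + v u ^ 2) / 2)) :=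
          Finset.sum_le_sum fun t _ => Finset.sum_le_sum fun u _ => habs t u
      _ = ∑ t : ↥(Finset.Icc t1 T), ∑ u : ↥(Finset.Icc t1 T),
            ((if (t : ℕ) = (u : ℕ) then 0
              else c / ((max (t : ℕ) (u : ℕ) : ℕ) : ℝ) * v t ^ 2) / 2
            + (if (t : ℕ) = (u : ℕ) then 0
              else c / ((max (t : ℕ) (u : ℕ) : ℕ) : ℝ) * v u ^ 2) / 2) := by
          refine Finset.sum_congr rfl fun t _ => Finset.sum_congr rfl fun u _ => ?_
          split_ifs <;> ring
      _ = ∑ t : ↥(Finset.Icc t1 T), ∑ u : ↥(Finset.Icc t1 T),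
            (if (t : ℕ) = (u : ℕ) then 0
              else c / ((max (t : ℕ) (u : ℕ) : ℕ) : ℝ) * v t ^ 2) := by
          simp_rw [Finset.sum_add_distrib]
          have hswap : (∑ t : ↥(Finset.Icc t1 T), ∑ u : ↥(Finset.Icc t1 T),
              (if (t : ℕ) = (u : ℕ) then (0:ℝ)
                else c / ((max (t : ℕ) (u : ℕ) : ℕ) : ℝ) * v u ^ 2) / 2)
            = ∑ t : ↥(Finset.Icc t1 T), ∑ u : ↥(Finset.Icc t1 T),
              (if (t : ℕ) = (u : ℕ) then (0:ℝ)
                else c / ((max (t : ℕ) (u : ℕ) : ℕ) : ℝ) * v t ^ 2) / 2 := by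
            rw [Finset.sum_comm]
            refine Finset.sum_congr rfl fun t _ => Finset.sum_congr rfl fun u _ => ?_
            rw [Nat.max_comm]
            congr 1
            exact if_congr eq_comm rfl rfl
          rw [hswap, ← Finset.sum_add_distrib]
          refine Finset.sum_congr rfl fun t _ => ?_
          rw [← Finset.sum_add_distrib]
          refine Finset.sum_congr rfl fun u _ => ?_
          split_ifs <;> ring
      _ ≤ ∑ t : ↥(Finset.Icc t1 T), v t ^ 2 * (c * H) := by
          refine Finset.sum_le_sum fun t _ => ?_
          have h1 : (∑ u : ↥(Finset.Icc t1 T),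
              (if (t : ℕ) = (u : ℕ) then (0:ℝ)
                else c / ((max (t : ℕ) (u : ℕ) : ℕ) : ℝ) * v t ^ 2))
            = (v t ^ 2 * c) * ∑ u : ↥(Finset.Icc t1 T),
                (if (t : ℕ) = (u : ℕ) then 0
                  else (1 : ℝ) / ((max (t : ℕ) (u : ℕ) : ℕ) : ℝ)) := by
            rw [Finset.mul_sum]
            refine Finset.sum_congr rfl fun u _ => ?_
            split_ifs <;> ring
          rw [h1]
          have h2 : 0 ≤ v t ^ 2 * c := mul_nonneg (sq_nonneg _) hc
          calc (v t ^ 2 * c) * ∑ u : ↥(Finset.Icc t1 T),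
                (if (t : ℕ) = (u : ℕ) then 0
                  else (1 : ℝ) / ((max (t : ℕ) (u : ℕ) : ℕ) : ℝ))
              ≤ (v t ^ 2 * c) * H := mul_le_mul_of_nonneg_left (hrow t) h2
            _ = v t ^ 2 * (c * H) := by ring
      _ = c * H * ∑ t : ↥(Finset.Icc t1 T), v t ^ 2 := by
          rw [← Finset.sum_mul]
          ring
  -- positivity of norm
  have hN : ∀ v : ↥(Finset.Icc t1 T) → ℝ, v ≠ 0 →
      0 < ∑ t : ↥(Finset.Icc t1 T), v t ^ 2 := by
    intro v hv
    have : ∃ t, v t ≠ 0 := by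
      by_contra h
      push_neg at h
      exact hv (funext h)
    obtain ⟨t0, ht0⟩ := this
    exact Finset.sum_pos' (fun i _ => sq_nonneg _)
      ⟨t0, Finset.mem_univ _, by positivity⟩
  -- eigenvalue bounds
  have heig : ∀ (lam : ℝ) (v : ↥(Finset.Icc t1 T) → ℝ), v ≠ 0 → M.mulVec v = lam • v →
      1 - c * H ≤ lam ∧ lam ≤ 1 + c * H := by
    intro lam v hv heq
    have hNv := hN v hv
    have hdot : dotProduct v (M.mulVec v)
        = lam * ∑ t : ↥(Finset.Icc t1 T), v t ^ 2 := by
      rw [heq]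
      simp only [dotProduct, Pi.smul_apply, smul_eq_mul]
      rw [Finset.mul_sum]
      exact Finset.sum_congr rfl fun t _ => by ring
    have h1 := hQF v
    rw [hdot] at h1
    have h2 : |lam - 1| * (∑ t : ↥(Finset.Icc t1 T), v t ^ 2)
        ≤ (c * H) * (∑ t : ↥(Finset.Icc t1 T), v t ^ 2) := by
      calc |lam - 1| * (∑ t : ↥(Finset.Icc t1 T), v t ^ 2)
          = |(lam - 1) * ∑ t : ↥(Finset.Icc t1 T), v t ^ 2| := by
            rw [abs_mul, abs_of_nonneg hNv.le]
        _ = |lam * (∑ t : ↥(Finset.Icc t1 T), v t ^ 2)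
              - ∑ t : ↥(Finset.Icc t1 T), v t ^ 2| := by
            congr 1; ring
        _ ≤ (c * H) * (∑ t : ↥(Finset.Icc t1 T), v t ^ 2) := by
            calc _ ≤ c * H * ∑ t : ↥(Finset.Icc t1 T), v t ^ 2 := h1
              _ = _ := by ring
    have h3 : |lam - 1| ≤ c * H := le_of_mul_le_mul_right h2 hNv
    obtain ⟨ha, hb⟩ := abs_le.mp h3
    exact ⟨by linarith, by linarith⟩
  refine ⟨heig, ?_, ?_⟩
  · -- positive definiteness
    intro hcH
    rw [Matrix.posDef_iff_dotProduct_mulVec]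
    constructor
    · ext t u
      rw [Matrix.conjTranspose_apply, hM, hM]
      by_cases h : (t : ℕ) = (u : ℕ)
      · simp [h]
      · rw [if_neg h, if_neg (Ne.symm h), Nat.max_comm]
        simp
    · intro x hx
      have hNx := hN x hx
      have hstar : star x = x := by
        funext i
        simp
      rw [hstar]
      have h1 := hQF x
      obtain ⟨ha, _⟩ := abs_le.mp h1
      have h2 : 0 < (1 - c * H) * ∑ t : ↥(Finset.Icc t1 T), x t ^ 2 :=
        mul_pos (by linarith) hNx
      nlinarith
  · -- ARM quadratic part
    intro a b η r hpos hη hceq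
    have hk : (0 : ℝ) < 2 * (a + η) := by linarith
    -- linearity of partial sums
    have hSadd : ∀ (t : ↥(Finset.Icc t1 T)) (w z : ↥(Finset.Icc t1 T) → ℝ),
        (∑ s : ↥(Finset.Icc t1 T), if (s : ℕ) < (t : ℕ) then (w + z) s else 0)
          = (∑ s : ↥(Finset.Icc t1 T), if (s : ℕ) < (t : ℕ) then w s else 0)
            + (∑ s : ↥(Finset.Icc t1 T), if (s : ℕ) < (t : ℕ) then z s else 0) := by
      intro t w z
      rw [← Finset.sum_add_distrib]
      refine Finset.sum_congr rfl fun s _ => ?_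
      by_cases h : (s : ℕ) < (t : ℕ) <;> simp [h]
    have hSsub : ∀ (t : ↥(Finset.Icc t1 T)) (w z : ↥(Finset.Icc t1 T) → ℝ),
        (∑ s : ↥(Finset.Icc t1 T), if (s : ℕ) < (t : ℕ) then (w - z) s else 0)
          = (∑ s : ↥(Finset.Icc t1 T), if (s : ℕ) < (t : ℕ) then w s else 0)
            - (∑ s : ↥(Finset.Icc t1 T), if (s : ℕ) < (t : ℕ) then z s else 0) := by
      intro t w z
      rw [← Finset.sum_sub_distrib]
      refine Finset.sum_congr rfl fun s _ => ?_
      by_cases h : (s : ℕ) < (t : ℕ) <;> simp [h]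
    constructor
    · intro p q
      have key : armVQuad t1 T a b η r (p + q) + armVQuad t1 T a b η r (p - q)
          - 2 * armVQuad t1 T a b η r p
          = ∑ t : ↥(Finset.Icc t1 T),
              (-(2 * (a + η)) * q t ^ 2
                + 2 * η * (q t * (∑ s : ↥(Finset.Icc t1 T),
                    if (s : ℕ) < (t : ℕ) then q s else 0) / ((t : ℕ) : ℝ))) := by
        simp only [armVQuad, refSub]
        rw [Finset.mul_sum, ← Finset.sum_add_distrib, ← Finset.sum_sub_distrib]
        refine Finset.sum_congr rfl fun t _ => ?_
        rw [hSadd t p q, hSsub t p q]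
        simp only [Pi.add_apply, Pi.sub_apply]
        have ht0 : ((t : ℕ) : ℝ) ≠ 0 := (htpos t).ne'
        field_simp
        ring
      rw [key, hexp q]
      -- rewrite the off-diagonal double sum
      have hsplit : ∀ t u : ↥(Finset.Icc t1 T),
          (if (t : ℕ) = (u : ℕ) then (0:ℝ)
            else -c / ((max (t : ℕ) (u : ℕ) : ℕ) : ℝ) * (q t * q u))
          = -c * ((if (u : ℕ) < (t : ℕ) then q t * q u / ((t : ℕ) : ℝ) else 0)
              + (if (t : ℕ) < (u : ℕ) then q t * q u / ((u : ℕ) : ℝ) else 0)) := by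
        intro t u
        rcases Nat.lt_trichotomy (t : ℕ) (u : ℕ) with h | h | h
        · rw [if_neg (Nat.ne_of_lt h), if_neg (by omega), if_pos h,
            max_eq_right h.le]
          ring
        · rw [if_pos h, if_neg (by omega), if_neg (by omega)]
          ring
        · rw [if_neg (by omega), if_pos h, if_neg (by omega),
            max_eq_left h.le]
          ring
      simp_rw [hsplit]
      have hBA : (∑ t : ↥(Finset.Icc t1 T), ∑ u : ↥(Finset.Icc t1 T),
            (if (t : ℕ) < (u : ℕ) then q t * q u / ((u : ℕ) : ℝ) else 0))
          = ∑ t : ↥(Finset.Icc t1 T), ∑ u : ↥(Finset.Icc t1 T),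
            (if (u : ℕ) < (t : ℕ) then q t * q u / ((t : ℕ) : ℝ) else 0) := by
        rw [Finset.sum_comm]
        refine Finset.sum_congr rfl fun t _ => Finset.sum_congr rfl fun u _ => ?_
        split_ifs with h
        · ring
        · rfl
      have hA : ∀ t : ↥(Finset.Icc t1 T),
          (∑ u : ↥(Finset.Icc t1 T),
            (if (u : ℕ) < (t : ℕ) then q t * q u / ((t : ℕ) : ℝ) else 0))
          = q t * (∑ s : ↥(Finset.Icc t1 T),
              if (s : ℕ) < (t : ℕ) then q s else 0) / ((t : ℕ) : ℝ) := by
        intro t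
        rw [mul_comm (q t), Finset.sum_mul, Finset.sum_div]
        refine Finset.sum_congr rfl fun u _ => ?_
        split_ifs with h
        · ring
        · simp
      have hOFF : (∑ t : ↥(Finset.Icc t1 T), ∑ u : ↥(Finset.Icc t1 T),
            (-c * ((if (u : ℕ) < (t : ℕ) then q t * q u / ((t : ℕ) : ℝ) else 0)
              + (if (t : ℕ) < (u : ℕ) then q t * q u / ((u : ℕ) : ℝ) else 0))))
          = -c * (2 * ∑ t : ↥(Finset.Icc t1 T),
              q t * (∑ s : ↥(Finset.Icc t1 T),
                if (s : ℕ) < (t : ℕ) then q s else 0) / ((t : ℕ) : ℝ)) := by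
        simp_rw [← Finset.mul_sum]
        congr 1
        simp_rw [Finset.sum_add_distrib]
        rw [hBA, ← Finset.sum_add_distrib]
        rw [Finset.mul_sum]
        refine Finset.sum_congr rfl fun t _ => ?_
        rw [hA t]
        ring
      rw [hOFF, hceq]
      rw [Finset.sum_add_distrib, ← Finset.mul_sum, ← Finset.mul_sum]
      field_simp
      ring
    · intro lam v hv heq
      have hinv : M.mulVec v = ((-(2 * (a + η)))⁻¹ * lam) • v := by
        have h1 : (-(2 * (a + η))) • M.mulVec v = lam • v := by
          rw [← Matrix.smul_mulVec]; exact heq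
        have hne : (-(2 * (a + η))) ≠ 0 := by
          intro h; rw [neg_eq_zero] at h; linarith
        funext i
        have := congrFun h1 i
        simp only [Pi.smul_apply, smul_eq_mul] at this ⊢
        field_simp at this ⊢
        linarith [this]
      obtain ⟨hlo, hhi⟩ := heig ((-(2 * (a + η)))⁻¹ * lam) v hv hinv
      have hne : (2 * (a + η)) ≠ 0 := hk.ne'
      have hinveq : (-(2 * (a + η)))⁻¹ * lam = -(lam / (2 * (a + η))) := by
        field_simp
      rw [hinveq] at hlo hhi
      have he : 2 * (a + η) * -(lam / (2 * (a + η))) = -lam := by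
        field_simp
      constructor
      · have h1 := mul_le_mul_of_nonneg_left hhi hk.le
        rw [he] at h1
        linarith
      · have h1 := mul_le_mul_of_nonneg_left hlo hk.le
        rw [he] at h1
        linarith
end

section
/- Fix integers 1 ≤ t1 < T and reals c ≥ 0, r ≥ 0, p̄ > 0, z ≥ p̄/2. Suppose p : {t1, …, T} → [0, p̄] is non-increasing and satisfies the two linear equations p_{t1} = c·r + z + c·Σ_{s=t1+1}^{T} (p_s/s) and p_T = c·t1·r/T + z + (c/T)·Σ_{s=t1}^{T−1} p_s. Then c·Σ_{s=t1+1}^{T} (1/s) < 1. -/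
/-- Diagonal dominance of the optimal markdown linear system: if a non-increasing price
curve `p` valued in `[0, p̄]` satisfies the first and last rows of the system `A·p = b`
(with `z ≥ p̄/2`), then `c·Σ_{s=t1+1}^{T} 1/s < 1`. -/
theorem markdown_system_diagonally_dominant
    (t1 T : ℕ) (ht1 : 1 ≤ t1) (htT : t1 < T)
    (c r pbar z : ℝ) (hc : 0 ≤ c) (hr : 0 ≤ r) (hpbar : 0 < pbar) (hz : pbar / 2 ≤ z)
    (p : ℕ → ℝ) (hp : ∀ t ∈ Finset.Icc t1 T, p t ∈ Set.Icc 0 pbar)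
    (hmono : AntitoneOn p ↑(Finset.Icc t1 T))
    (heq1 : p t1 = c * r + z + c * ∑ s ∈ Finset.Icc (t1 + 1) T, p s / (s : ℝ))
    (heq2 : p T = c * (t1 : ℝ) * r / (T : ℝ) + z +
      (c / (T : ℝ)) * ∑ s ∈ Finset.Icc t1 (T - 1), p s) :
    c * ∑ s ∈ Finset.Icc (t1 + 1) T, (1 : ℝ) / (s : ℝ) < 1 := by
  by_contra hcon
  push_neg at hcon
  set S : ℝ := ∑ s ∈ Finset.Icc (t1 + 1) T, (1 : ℝ) / (s : ℝ) with hSdef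
  have hT0 : (0 : ℝ) < (T : ℝ) := by exact_mod_cast (by omega : 0 < T)
  have hSpos : 0 < S := by
    apply Finset.sum_pos
    · intro s hs
      have h1 := (Finset.mem_Icc.mp hs).1
      have : (0 : ℝ) < (s : ℝ) := by exact_mod_cast (by omega : 0 < s)
      positivity
    · exact Finset.nonempty_Icc.mpr (by omega)
  have hcpos : 0 < c := by
    rcases hc.lt_or_eq with h | h
    · exact h
    · exfalso; rw [← h] at hcon; simp at hcon; linarith
  have ht1m : t1 ∈ Finset.Icc t1 T := Finset.mem_Icc.mpr ⟨le_refl _, htT.le⟩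
  have hTm : T ∈ Finset.Icc t1 T := Finset.mem_Icc.mpr ⟨htT.le, le_refl _⟩
  have hpT0 : 0 ≤ p T := (hp T hTm).1
  have hpt1_le : p t1 ≤ pbar := (hp t1 ht1m).2
  -- sum lower bound: Σ p s / s ≥ p T * S
  have hA : p T * S ≤ ∑ s ∈ Finset.Icc (t1 + 1) T, p s / (s : ℝ) := by
    rw [hSdef, Finset.mul_sum]
    apply Finset.sum_le_sum
    intro s hs
    obtain ⟨h1, h2⟩ := Finset.mem_Icc.mp hs
    have hs0 : (0 : ℝ) < (s : ℝ) := by exact_mod_cast (by omega : 0 < s)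
    have hpsT : p T ≤ p s := by
      apply hmono (Finset.mem_coe.mpr (Finset.mem_Icc.mpr ⟨by omega, h2⟩))
        (Finset.mem_coe.mpr hTm) (by exact_mod_cast h2)
    rw [mul_one_div]
    gcongr
  -- from heq1: p t1 ≥ pbar/2 + p T
  have h1 : pbar / 2 + p T ≤ p t1 := by
    have hcA : c * (p T * S) ≤ c * ∑ s ∈ Finset.Icc (t1 + 1) T, p s / (s : ℝ) :=
      mul_le_mul_of_nonneg_left hA hc
    have hcr : 0 ≤ c * r := mul_nonneg hc hr
    nlinarith [hcon, hpT0]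
  -- from heq2: p T ≥ pbar/2 + (c/T) * p t1
  have hB : p t1 ≤ ∑ s ∈ Finset.Icc t1 (T - 1), p s := by
    apply Finset.single_le_sum
    · intro s hs
      obtain ⟨hs1, hs2⟩ := Finset.mem_Icc.mp hs
      exact (hp s (Finset.mem_Icc.mpr ⟨hs1, by omega⟩)).1
    · exact Finset.mem_Icc.mpr ⟨le_refl _, by omega⟩
  have h2 : pbar / 2 + (c / (T : ℝ)) * p t1 ≤ p T := by
    have hcB : (c / (T : ℝ)) * p t1 ≤ (c / (T : ℝ)) * ∑ s ∈ Finset.Icc t1 (T - 1), p s :=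
      mul_le_mul_of_nonneg_left hB (div_nonneg hc hT0.le)
    have hnn : 0 ≤ c * (t1 : ℝ) * r / (T : ℝ) := by positivity
    linarith [heq2]
  have hfinal : 0 < (c / (T : ℝ)) * p t1 :=
    mul_pos (div_pos hcpos hT0) (by linarith)
  linarith
end

section
/- Let λ > 0, let I = [ℓ, u] ⊆ ℝ be a nonempty closed interval, and let f : ℝ → ℝ be differentiable and λ-strongly concave on I, i.e., f(y) ≤ f(x) + f′(x)·(y − x) − (λ/2)·(y − x)² for all x, y ∈ I. Let p* ∈ I satisfy f′(p*) = 0. Let (g_t)_{t ≥ 2} be any real numbers, let p_2 ∈ I, and define the projected gradient iterates p_{t+1} = proj_I(p_t + g_t/(λ·t)) for t ≥ 2, where proj_I is the nearest-point projection onto I. Set δ_t = g_t − f′(p_t). Then for every t ≥ 2: (p_{t+1} − p*)² ≤ (2/(λ·t·(t−1)))·Σ_{i=2}^{t} (i−1)·δ_i·(p_i − p*) + (1/(λ²·t·(t−1)))·Σ_{i=2}^{t} g_i². -/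
set_option maxHeartbeats 1000000 in
/-- Error recursion for projected stochastic gradient ascent on a `λ`-strongly concave
differentiable function over a closed interval `I = [ℓ, u]`: with iterates
`p_{t+1} = proj_I(p_t + g_t/(λ·t))` and gradient-estimation errors
`δ_t = g_t − f′(p_t)`, for every `t ≥ 2`,
`(p_{t+1} − p*)² ≤ (2/(λ·t·(t−1)))·Σ_{i=2}^{t} (i−1)·δ_i·(p_i − p*)
  + (1/(λ²·t·(t−1)))·Σ_{i=2}^{t} g_i²`. -/
theorem projected_gradient_error_recursion
    (lam : ℝ) (hlam : 0 < lam)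
    (l u : ℝ) (hlu : l ≤ u)
    (f : ℝ → ℝ)
    (hdiff : ∀ x ∈ Set.Icc l u, DifferentiableAt ℝ f x)
    (hconc : ∀ x ∈ Set.Icc l u, ∀ y ∈ Set.Icc l u,
      f y ≤ f x + deriv f x * (y - x) - lam / 2 * (y - x) ^ 2)
    (pstar : ℝ) (hps : pstar ∈ Set.Icc l u) (hps' : deriv f pstar = 0)
    (g : ℕ → ℝ) (p : ℕ → ℝ) (hp2 : p 2 ∈ Set.Icc l u)
    (hrec : ∀ t : ℕ, 2 ≤ t → p (t + 1) = max l (min (p t + g t / (lam * (t : ℝ))) u)) :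
    ∀ t : ℕ, 2 ≤ t →
      (p (t + 1) - pstar) ^ 2 ≤
        (2 / (lam * (t : ℝ) * ((t : ℝ) - 1))) *
            ∑ i ∈ Finset.Icc 2 t, ((i : ℝ) - 1) * (g i - deriv f (p i)) * (p i - pstar)
          + (1 / (lam ^ 2 * (t : ℝ) * ((t : ℝ) - 1))) *
            ∑ i ∈ Finset.Icc 2 t, (g i) ^ 2 := by
  obtain ⟨hl, hu⟩ := hps
  have hlamne : lam ≠ 0 := ne_of_gt hlam
  -- clamp lemma
  have hclamp : ∀ x : ℝ, (max l (min x u) - pstar) ^ 2 ≤ (x - pstar) ^ 2 := by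
    intro x
    rcases le_total x u with h1 | h1
    · rw [min_eq_left h1]
      rcases le_total l x with h2 | h2
      · rw [max_eq_right h2]
      · rw [max_eq_left h2]; nlinarith
    · rw [min_eq_right h1, max_eq_right hlu]; nlinarith
  -- membership
  have hmem : ∀ t : ℕ, 2 ≤ t → p t ∈ Set.Icc l u := by
    intro t ht
    induction t with
    | zero => omega
    | succ n ih =>
      rcases Nat.lt_or_ge n 2 with h | h
      · interval_cases n
        · omega
        · exact hp2
      · rw [hrec n h]
        exact ⟨le_max_left _ _, max_le hlu (min_le_right _ _)⟩
  -- gradient inequality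
  have hgrad : ∀ x ∈ Set.Icc l u, deriv f x * (x - pstar) ≤ -lam * (x - pstar) ^ 2 := by
    intro x hx
    have h1 := hconc x hx pstar ⟨hl, hu⟩
    have h2 := hconc pstar ⟨hl, hu⟩ x hx
    rw [hps'] at h2
    nlinarith
  -- per-step inequality, in scaled form
  have step : ∀ n : ℕ, 2 ≤ n →
      (n : ℝ) * ((n : ℝ) - 1) * (p (n + 1) - pstar) ^ 2 ≤
        ((n : ℝ) - 1) * ((n : ℝ) - 2) * (p n - pstar) ^ 2
          + 2 * ((n : ℝ) - 1) / lam * ((g n - deriv f (p n)) * (p n - pstar))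
          + (g n) ^ 2 / lam ^ 2 := by
    intro n hn
    have hs : (2:ℝ) ≤ (n : ℝ) := by exact_mod_cast hn
    have hspos : (0:ℝ) < (n : ℝ) := by linarith
    set s : ℝ := (n : ℝ) with hsdef
    set e : ℝ := p n - pstar with hedef
    set d : ℝ := deriv f (p n) with hddef
    set q : ℝ := g n / (lam * s) with hqdef
    have hG : g n = q * (lam * s) := by
      rw [hqdef, div_mul_cancel₀ _ (mul_ne_zero hlamne hspos.ne')]
    have hgr : d * e ≤ -lam * e ^ 2 := hgrad (p n) (hmem n hn)
    have hcl : (p (n + 1) - pstar) ^ 2 ≤ (p n + q - pstar) ^ 2 := by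
      have := hclamp (p n + g n / (lam * s))
      rw [← hrec n hn] at this
      exact this
    have h3 : 2 * (s - 1) / lam * (d * e) ≤ -(2 * (s - 1) * e ^ 2) := by
      have hc : (0:ℝ) ≤ 2 * (s - 1) / lam := div_nonneg (by linarith) hlam.le
      calc 2 * (s - 1) / lam * (d * e) ≤ 2 * (s - 1) / lam * (-lam * e ^ 2) :=
            mul_le_mul_of_nonneg_left hgr hc
        _ = -(2 * (s - 1) * e ^ 2) := by field_simp
    have h4 : 2 * (s - 1) / lam * ((q * (lam * s) - d) * e)
        = 2 * (s - 1) * s * (q * e) - 2 * (s - 1) / lam * (d * e) := by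
      field_simp
    have h5 : (q * (lam * s)) ^ 2 / lam ^ 2 = q ^ 2 * s ^ 2 := by
      field_simp
    rw [hG, h4, h5]
    have hmul : s * (s - 1) * (p (n + 1) - pstar) ^ 2 ≤ s * (s - 1) * (p n + q - pstar) ^ 2 :=
      mul_le_mul_of_nonneg_left hcl (by nlinarith)
    have hexp : (p n + q - pstar) ^ 2 = e ^ 2 + 2 * (e * q) + q ^ 2 := by
      rw [hedef]; ring
    nlinarith [sq_nonneg q, hmul, h3]
  -- scaled key inequality
  have key : ∀ t : ℕ, 2 ≤ t →
      (t : ℝ) * ((t : ℝ) - 1) * (p (t + 1) - pstar) ^ 2 ≤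
        ∑ i ∈ Finset.Icc 2 t,
          (2 * ((i : ℝ) - 1) / lam * ((g i - deriv f (p i)) * (p i - pstar)) + (g i) ^ 2 / lam ^ 2) := by
    intro t ht
    induction t, ht using Nat.le_induction with
    | base =>
      have h := step 2 le_rfl
      simp only [Finset.Icc_self, Finset.sum_singleton]
      push_cast at h ⊢
      nlinarith [h]
    | succ n hn ih =>
      have h := step (n + 1) (by omega)
      rw [Finset.sum_Icc_succ_top (by omega : 2 ≤ n + 1)]
      push_cast at h ⊢
      linarith [h, ih]
  intro t ht
  have hkey := key t ht
  have ht2 : (2:ℝ) ≤ (t:ℝ) := by exact_mod_cast ht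
  have htpos : (0:ℝ) < (t : ℝ) * ((t : ℝ) - 1) := by nlinarith
  rw [Finset.sum_add_distrib] at hkey
  have e1 : ∑ i ∈ Finset.Icc 2 t, 2 * ((i : ℝ) - 1) / lam * ((g i - deriv f (p i)) * (p i - pstar))
      = (2 / lam) * ∑ i ∈ Finset.Icc 2 t, ((i : ℝ) - 1) * (g i - deriv f (p i)) * (p i - pstar) := by
    rw [Finset.mul_sum]
    exact Finset.sum_congr rfl fun i _ => by ring
  have e2 : ∑ i ∈ Finset.Icc 2 t, (g i) ^ 2 / lam ^ 2
      = (1 / lam ^ 2) * ∑ i ∈ Finset.Icc 2 t, (g i) ^ 2 := by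
    rw [Finset.mul_sum]
    exact Finset.sum_congr rfl fun i _ => by ring
  rw [e1, e2] at hkey
  have h1 : (p (t + 1) - pstar) ^ 2 ≤
      ((2 / lam) * ∑ i ∈ Finset.Icc 2 t, ((i : ℝ) - 1) * (g i - deriv f (p i)) * (p i - pstar)
        + (1 / lam ^ 2) * ∑ i ∈ Finset.Icc 2 t, (g i) ^ 2) / ((t : ℝ) * ((t : ℝ) - 1)) := by
    rw [le_div_iff₀ htpos]; linarith
  refine h1.trans_eq ?_
  have htne : (t : ℝ) * ((t : ℝ) - 1) ≠ 0 := ne_of_gt htpos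
  have habs : ∀ A B : ℝ, (2 / lam * A + 1 / lam ^ 2 * B) / ((t : ℝ) * ((t : ℝ) - 1))
      = 2 / (lam * (t : ℝ) * ((t : ℝ) - 1)) * A + 1 / (lam ^ 2 * (t : ℝ) * ((t : ℝ) - 1)) * B := by
    intro A B
    have htn : (t : ℝ) ≠ 0 := by linarith
    have ht1 : (t : ℝ) - 1 ≠ 0 := by linarith
    field_simp
  exact habs _ _
end
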